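/- arXiv:1011.6499 — 6 statements merged into one kernel-verified Lean document; each statement's English description precedes it below -/
import Mathlib

section
/- Let g : ℝ → ℝ be continuous and satisfy |g(ξ)| ≤ C₀(1 + |ξ|)^p for some constants C₀ > 0 and p ≥ 0. Then for every μ ∈ ℝ, the integral ∫_ℝ β·e^{β(ξ−μ)}·(e^{β(ξ−μ)} + 1)⁻²·g(ξ) dξ converges to g(μ) as β → ∞. -/
open Filter Real MeasureTheory Set

noncomputable def phiFD (u : ℝ) : ℝ := Real.exp u * ((Real.exp u + 1) ^ 2)⁻¹

lemma phiFD_nonneg (u : ℝ) : 0 ≤ phiFD u := by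
  unfold phiFD; positivity

lemma phiFD_continuous : Continuous phiFD := by
  unfold phiFD
  exact Real.continuous_exp.mul
    (((Real.continuous_exp.add continuous_const).pow 2).inv₀ (fun x => (by positivity : (Real.exp x + 1) ^ 2 ≠ 0)))

lemma phiFD_le (u : ℝ) : phiFD u ≤ Real.exp (-|u|) := by
  unfold phiFD
  rcases le_or_gt 0 u with h | h
  · rw [abs_of_nonneg h, Real.exp_neg]
    have h1 : (Real.exp u) ^ 2 ≤ (Real.exp u + 1) ^ 2 := by nlinarith [Real.exp_pos u]
    have h2 : ((Real.exp u + 1) ^ 2)⁻¹ ≤ ((Real.exp u) ^ 2)⁻¹ := by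
      apply inv_anti₀ (by positivity) h1
    calc Real.exp u * ((Real.exp u + 1) ^ 2)⁻¹
        ≤ Real.exp u * ((Real.exp u) ^ 2)⁻¹ :=
          mul_le_mul_of_nonneg_left h2 (Real.exp_pos u).le
      _ = (Real.exp u)⁻¹ := by
          rw [sq]
          field_simp
  · rw [abs_of_neg h, neg_neg]
    have h1 : (1 : ℝ) ≤ (Real.exp u + 1) ^ 2 := by nlinarith [Real.exp_pos u]
    have h2 : ((Real.exp u + 1) ^ 2)⁻¹ ≤ 1 := by
      rw [inv_le_one_iff₀]; right; exact h1
    calc Real.exp u * ((Real.exp u + 1) ^ 2)⁻¹ ≤ Real.exp u * 1 :=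
          mul_le_mul_of_nonneg_left h2 (Real.exp_pos u).le
      _ = Real.exp u := mul_one _

lemma integrable_exp_neg_mul_abs {c : ℝ} (hc : 0 < c) :
    Integrable (fun x : ℝ => Real.exp (-c * |x|)) := by
  have hIoi : IntegrableOn (fun x : ℝ => Real.exp (-c * |x|)) (Ioi 0) := by
    apply (exp_neg_integrableOn_Ioi 0 hc).congr_fun ?_ measurableSet_Ioi
    intro x hx
    show Real.exp (-c * x) = Real.exp (-c * |x|)
    rw [abs_of_pos hx]
  have hIic : IntegrableOn (fun x : ℝ => Real.exp (-c * |x|)) (Iic 0) := by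
    rw [← Measure.map_neg_eq_self (volume : Measure ℝ)]
    have m : MeasurableEmbedding fun x : ℝ => -x := (Homeomorph.neg ℝ).measurableEmbedding
    rw [m.integrableOn_map_iff]
    simp_rw [Function.comp_def, abs_neg, neg_preimage, neg_Iic, neg_zero]
    exact Iff.mpr integrableOn_Ici_iff_integrableOn_Ioi hIoi
  rw [← integrableOn_univ, ← Iic_union_Ioi (a := (0 : ℝ))]
  exact hIic.union hIoi

lemma phiFD_integrable : Integrable phiFD := by
  apply (integrable_exp_neg_mul_abs one_pos).mono' phiFD_continuous.aestronglyMeasurable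
  refine Eventually.of_forall fun u => ?_
  rw [Real.norm_eq_abs, abs_of_nonneg (phiFD_nonneg u)]
  simpa using phiFD_le u

lemma phiFD_hasDerivAt (x : ℝ) :
    HasDerivAt (fun u : ℝ => -(Real.exp u + 1)⁻¹) (phiFD x) x := by
  have h1 : HasDerivAt (fun u : ℝ => Real.exp u + 1) (Real.exp x) x :=
    (Real.hasDerivAt_exp x).add_const 1
  have h2 : HasDerivAt (fun u : ℝ => -(Real.exp u + 1)⁻¹) (-(-Real.exp x / (Real.exp x + 1) ^ 2)) x :=
    (h1.inv (by positivity)).neg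
  convert h2 using 1
  unfold phiFD
  rw [neg_div', neg_neg, div_eq_mul_inv]

lemma phiFD_integral : ∫ u : ℝ, phiFD u = 1 := by
  have hIoi : ∫ x in Ioi (0 : ℝ), phiFD x = 0 - -(Real.exp 0 + 1)⁻¹ := by
    apply integral_Ioi_of_hasDerivAt_of_tendsto' (fun x _ => phiFD_hasDerivAt x)
      phiFD_integrable.integrableOn
    have h3 : Tendsto (fun u : ℝ => Real.exp u + 1) atTop atTop :=
      tendsto_atTop_add_const_right _ 1 Real.tendsto_exp_atTop
    have h4 := h3.inv_tendsto_atTop.neg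
    rw [neg_zero] at h4
    exact h4
  have hIic : ∫ x in Iic (0 : ℝ), phiFD x = -(Real.exp 0 + 1)⁻¹ - -1 := by
    apply integral_Iic_of_hasDerivAt_of_tendsto' (fun x _ => phiFD_hasDerivAt x)
      phiFD_integrable.integrableOn
    have h3 : Tendsto (fun u : ℝ => Real.exp u + 1) atBot (nhds 1) := by
      have := Real.tendsto_exp_atBot.add_const 1
      simpa using this
    have h4 := (h3.inv₀ one_ne_zero).neg
    simpa using h4
  have := intervalIntegral.integral_Iic_add_Ioi (b := (0:ℝ)) phiFD_integrable.integrableOn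
    phiFD_integrable.integrableOn
  rw [← this, hIoi, hIic, Real.exp_zero]
  norm_num

lemma exists_poly_exp_bound (c p : ℝ) (hp : 0 ≤ p) :
    ∃ K : ℝ, 0 ≤ K ∧ ∀ t : ℝ, 0 ≤ t →
      (1 + c + t) ^ p * Real.exp (-(1/2) * t) ≤ K := by
  set f : ℝ → ℝ := fun t => (1 + c + t) ^ p * Real.exp (-(1/2) * t) with hf
  have hcont : Continuous f := by
    apply Continuous.mul
    · exact (continuous_const.add continuous_id).rpow_const (fun x => Or.inr hp)
    · exact Real.continuous_exp.comp (continuous_const.mul continuous_id)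
  have h0 : Tendsto (fun t : ℝ => t ^ p * Real.exp (-(1/2) * t)) atTop (nhds 0) :=
    tendsto_rpow_mul_exp_neg_mul_atTop_nhds_zero p (1/2) (by norm_num)
  have h1 : Tendsto (fun t : ℝ => 1 + c + t) atTop atTop :=
    tendsto_atTop_add_const_left _ _ tendsto_id
  have h2 := h0.comp h1
  have h5 : Tendsto f atTop (nhds 0) := by
    have h3 : Tendsto (fun t : ℝ =>
        Real.exp ((1/2) * (1 + c)) *
          ((1 + c + t) ^ p * Real.exp (-(1/2) * (1 + c + t)))) atTop (nhds 0) := by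
      have := h2.const_mul (Real.exp ((1/2) * (1 + c)))
      simpa using this
    apply h3.congr
    intro t
    rw [hf]
    simp only
    rw [mul_comm (Real.exp ((1/2) * (1 + c))) _, mul_assoc, ← Real.exp_add]
    ring_nf
  have hev : ∀ᶠ t in atTop, f t < 1 := h5.eventually (gt_mem_nhds one_pos)
  obtain ⟨T, hT⟩ := eventually_atTop.mp hev
  set A : ℝ := max T 0 with hA
  obtain ⟨z, hz, hzmax⟩ := (isCompact_Icc (a := (0:ℝ)) (b := A)).exists_isMaxOn
    ⟨0, by simp [hA, le_max_right]⟩ hcont.continuousOn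
  refine ⟨max (f z) 1, le_trans zero_le_one (le_max_right _ _), fun t ht => ?_⟩
  rcases le_or_gt t A with h | h
  · exact le_trans (hzmax ⟨ht, h⟩) (le_max_left _ _)
  · exact le_trans (hT t (le_trans (le_max_left T 0) h.le)).le (le_max_right _ _)

lemma fd_change_of_variables (β μ : ℝ) (hβ : 0 < β) (g : ℝ → ℝ) :
    (∫ ξ : ℝ, β * Real.exp (β * (ξ - μ)) * ((Real.exp (β * (ξ - μ)) + 1) ^ 2)⁻¹ * g ξ)
      = ∫ v : ℝ, phiFD v * g (v / β + μ) := by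
  set F : ℝ → ℝ := fun v => β * (phiFD v * g (v / β + μ)) with hF
  have h1 : ∀ ξ : ℝ,
      β * Real.exp (β * (ξ - μ)) * ((Real.exp (β * (ξ - μ)) + 1) ^ 2)⁻¹ * g ξ
        = F (β * (ξ - μ)) := by
    intro ξ
    rw [hF]
    simp only [phiFD]
    rw [show β * (ξ - μ) / β + μ = ξ by field_simp; ring]
    ring
  calc (∫ ξ : ℝ, β * Real.exp (β * (ξ - μ)) * ((Real.exp (β * (ξ - μ)) + 1) ^ 2)⁻¹ * g ξ)
      = ∫ ξ : ℝ, F (β * (ξ - μ)) := by simp_rw [h1]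
    _ = ∫ x : ℝ, F (β * x) := integral_sub_right_eq_self (fun x => F (β * x)) μ
    _ = |β⁻¹| • ∫ v : ℝ, F v := Measure.integral_comp_mul_left F β
    _ = ∫ v : ℝ, phiFD v * g (v / β + μ) := by
        rw [hF]
        rw [integral_const_mul, abs_of_pos (inv_pos.mpr hβ), smul_eq_mul,
          ← mul_assoc, inv_mul_cancel₀ hβ.ne', one_mul]

/-- Minus the derivative of the Fermi–Dirac distribution converges to the Dirac
delta at `μ`: for a continuous function `g` of polynomial growth,
`∫ β e^{β(ξ−μ)} (e^{β(ξ−μ)}+1)⁻² g(ξ) dξ → g(μ)` as `β → ∞`. -/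
theorem stmt_4 (g : ℝ → ℝ) (hg : Continuous g) (C₀ p : ℝ) (hC₀ : 0 < C₀)
    (hp : 0 ≤ p) (hgrowth : ∀ ξ : ℝ, |g ξ| ≤ C₀ * (1 + |ξ|) ^ p) (μ : ℝ) :
    Tendsto (fun β : ℝ =>
        ∫ ξ : ℝ, β * Real.exp (β * (ξ - μ)) * ((Real.exp (β * (ξ - μ)) + 1) ^ 2)⁻¹ * g ξ)
      atTop (nhds (g μ)) := by
  obtain ⟨K, hK0, hK⟩ := exists_poly_exp_bound |μ| p hp
  have hμint : ∫ v : ℝ, phiFD v * g μ = g μ := by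
    rw [integral_mul_const, phiFD_integral, one_mul]
  have key : Tendsto (fun β : ℝ => ∫ v : ℝ, phiFD v * g (v / β + μ))
      atTop (nhds (∫ v : ℝ, phiFD v * g μ)) := by
    apply tendsto_integral_filter_of_dominated_convergence
      (bound := fun v => C₀ * K * Real.exp (-(1/2) * |v|))
    · refine Eventually.of_forall fun β => ?_
      exact (phiFD_continuous.mul (hg.comp (by continuity))).aestronglyMeasurable
    · filter_upwards [eventually_ge_atTop (1 : ℝ)] with β hβ
      refine Eventually.of_forall fun v => ?_
      rw [Real.norm_eq_abs, abs_mul, abs_of_nonneg (phiFD_nonneg v)]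
      have hb2 : |v / β + μ| ≤ |μ| + |v| := by
        have hdiv : |v / β| ≤ |v| := by
          rw [abs_div, abs_of_pos (by linarith : (0:ℝ) < β)]
          exact div_le_self (abs_nonneg v) hβ
        calc |v / β + μ| ≤ |v / β| + |μ| := abs_add_le _ _
          _ ≤ |v| + |μ| := by linarith
          _ = |μ| + |v| := add_comm _ _
      have hmono : (1 + |v / β + μ|) ^ p ≤ (1 + |μ| + |v|) ^ p := by
        apply Real.rpow_le_rpow (by positivity) (by linarith) hp
      have hb1 : |g (v / β + μ)| ≤ C₀ * (1 + |μ| + |v|) ^ p :=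
        (hgrowth _).trans (mul_le_mul_of_nonneg_left hmono hC₀.le)
      have h3 : phiFD v ≤ Real.exp (-(1/2) * |v|) * Real.exp (-(1/2) * |v|) := by
        rw [← Real.exp_add]
        calc phiFD v ≤ Real.exp (-|v|) := phiFD_le v
          _ = Real.exp (-(1/2) * |v| + -(1/2) * |v|) := by ring_nf
      calc phiFD v * |g (v / β + μ)|
          ≤ (Real.exp (-(1/2) * |v|) * Real.exp (-(1/2) * |v|)) *
              (C₀ * (1 + |μ| + |v|) ^ p) :=
            mul_le_mul h3 hb1 (abs_nonneg _) (by positivity)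
        _ = C₀ * ((1 + |μ| + |v|) ^ p * Real.exp (-(1/2) * |v|)) *
              Real.exp (-(1/2) * |v|) := by ring
        _ ≤ C₀ * K * Real.exp (-(1/2) * |v|) := by
            apply mul_le_mul_of_nonneg_right _ (Real.exp_pos _).le
            exact mul_le_mul_of_nonneg_left (hK |v| (abs_nonneg v)) hC₀.le
    · exact (integrable_exp_neg_mul_abs (by norm_num : (0:ℝ) < 1/2)).const_mul (C₀ * K)
    · refine Eventually.of_forall fun v => ?_
      have h1 : Tendsto (fun β : ℝ => v / β + μ) atTop (nhds μ) := by
        have h2 : Tendsto (fun β : ℝ => v / β) atTop (nhds 0) :=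
          tendsto_const_nhds.div_atTop tendsto_id
        simpa using h2.add_const μ
      exact ((hg.tendsto μ).comp h1).const_mul (phiFD v)
  rw [hμint] at key
  apply Tendsto.congr' _ key
  filter_upwards [eventually_gt_atTop (0 : ℝ)] with β hβ
  exact (fd_change_of_variables β μ hβ g).symm
end

section
/- Let g : ℝ → ℝ be continuously differentiable with both g and g' bounded on ℝ. Then for every μ ∈ ℝ, the integral ∫_ℝ β²·e^{β(ξ−μ)}·(e^{β(ξ−μ)} − 1)·(e^{β(ξ−μ)} + 1)⁻³·g(ξ) dξ converges to g'(μ) as β → ∞. -/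
open Filter Real MeasureTheory Topology

noncomputable def kk (t : ℝ) : ℝ := Real.exp t * ((Real.exp t + 1) ^ 2)⁻¹

lemma kk_nonneg (t : ℝ) : 0 ≤ kk t := by
  unfold kk; positivity

lemma continuous_kk : Continuous kk := by
  apply Real.continuous_exp.mul
  exact Continuous.inv₀ (by continuity) (fun t => by positivity)

lemma kk_le (t : ℝ) : kk t ≤ Real.exp (-|t|) := by
  have he := Real.exp_pos t
  rcases le_or_gt 0 t with h | h
  · rw [abs_of_nonneg h, Real.exp_neg]
    have h1 : (Real.exp t) ^ 2 ≤ (Real.exp t + 1) ^ 2 := by nlinarith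
    have h2 : ((Real.exp t + 1) ^ 2)⁻¹ ≤ ((Real.exp t) ^ 2)⁻¹ :=
      inv_anti₀ (by positivity) h1
    calc kk t ≤ Real.exp t * ((Real.exp t) ^ 2)⁻¹ :=
          mul_le_mul_of_nonneg_left h2 he.le
      _ = (Real.exp t)⁻¹ := by field_simp
  · rw [abs_of_neg h, neg_neg]
    have h1 : (1:ℝ) ≤ (Real.exp t + 1) ^ 2 := by nlinarith
    have h2 : ((Real.exp t + 1) ^ 2)⁻¹ ≤ 1 := by
      rw [inv_le_one_iff₀]; right; exact h1
    calc kk t ≤ Real.exp t * 1 := mul_le_mul_of_nonneg_left h2 he.le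
      _ = Real.exp t := mul_one _

lemma integrable_exp_neg_abs' : Integrable (fun t : ℝ => Real.exp (-|t|)) := by
  have h1 : IntegrableOn (fun t : ℝ => Real.exp (-|t|)) (Set.Iic 0) := by
    apply (integrableOn_exp_Iic 0).congr_fun ?_ measurableSet_Iic
    intro x hx
    simp only [Set.mem_Iic] at hx
    show Real.exp x = Real.exp (-|x|)
    rw [abs_of_nonpos hx, neg_neg]
  have h2 : IntegrableOn (fun t : ℝ => Real.exp (-|t|)) (Set.Ioi 0) := by
    apply (exp_neg_integrableOn_Ioi 0 one_pos).congr_fun ?_ measurableSet_Ioi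
    intro x hx
    simp only [Set.mem_Ioi] at hx
    show Real.exp (-1 * x) = Real.exp (-|x|)
    rw [abs_of_pos hx, neg_one_mul]
  have := h1.union h2
  rwa [Set.Iic_union_Ioi, integrableOn_univ] at this

lemma integrable_kk : Integrable kk := by
  apply integrable_exp_neg_abs'.mono' continuous_kk.aestronglyMeasurable
  refine ae_of_all _ fun t => ?_
  rw [Real.norm_eq_abs, abs_of_nonneg (kk_nonneg t)]
  exact kk_le t

lemma hasDerivAt_neg_inv (t : ℝ) :
    HasDerivAt (fun s => -((Real.exp s + 1)⁻¹)) (kk t) t := by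
  have h : HasDerivAt (fun s => Real.exp s + 1) (Real.exp t) t :=
    (Real.hasDerivAt_exp t).add_const 1
  have h2 := (h.inv (by positivity)).neg
  refine h2.congr_deriv ?_
  unfold kk
  have : Real.exp t + 1 ≠ 0 := by positivity
  field_simp

lemma integral_kk : ∫ t : ℝ, kk t = 1 := by
  have hbot : Tendsto (fun s : ℝ => -((Real.exp s + 1)⁻¹)) atBot (𝓝 (-1)) := by
    have h : Tendsto (fun s : ℝ => Real.exp s + 1) atBot (𝓝 1) := by
      simpa using Real.tendsto_exp_atBot.add tendsto_const_nhds
    have := (h.inv₀ (by norm_num)).neg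
    simpa using this
  have htop : Tendsto (fun s : ℝ => -((Real.exp s + 1)⁻¹)) atTop (𝓝 0) := by
    have h : Tendsto (fun s : ℝ => Real.exp s + 1) atTop atTop :=
      Real.tendsto_exp_atTop.atTop_add tendsto_const_nhds
    have := h.inv_tendsto_atTop.neg
    simpa using this
  have := MeasureTheory.integral_of_hasDerivAt_of_tendsto hasDerivAt_neg_inv
    integrable_kk hbot htop
  simpa using this

lemma hasDerivAt_kk (t : ℝ) :
    HasDerivAt kk (Real.exp t * (1 - Real.exp t) * ((Real.exp t + 1) ^ 3)⁻¹) t := by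
  have h : HasDerivAt (fun s => Real.exp s + 1) (Real.exp t) t :=
    (Real.hasDerivAt_exp t).add_const 1
  have hp : HasDerivAt (fun s => (Real.exp s + 1) ^ 2)
      (2 * (Real.exp t + 1) * Real.exp t) t := by
    simpa using h.fun_pow 2
  have hi := hp.inv (by positivity)
  have := (Real.hasDerivAt_exp t).mul hi
  refine this.congr_deriv ?_
  have hne : Real.exp t + 1 ≠ 0 := by positivity
  simp only [Pi.inv_apply]
  field_simp
  ring

lemma abs_kk'_le (t : ℝ) :
    |Real.exp t * (1 - Real.exp t) * ((Real.exp t + 1) ^ 3)⁻¹| ≤ kk t := by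
  have he := Real.exp_pos t
  have hne : Real.exp t + 1 ≠ 0 := by positivity
  rw [abs_mul, abs_mul, abs_of_nonneg he.le,
    abs_of_nonneg (by positivity : (0:ℝ) ≤ ((Real.exp t + 1) ^ 3)⁻¹)]
  have h1 : |1 - Real.exp t| ≤ Real.exp t + 1 := by
    rw [abs_le]; constructor <;> nlinarith
  have h2 : Real.exp t * |1 - Real.exp t| * ((Real.exp t + 1) ^ 3)⁻¹ ≤
      Real.exp t * (Real.exp t + 1) * ((Real.exp t + 1) ^ 3)⁻¹ :=
    mul_le_mul_of_nonneg_right (mul_le_mul_of_nonneg_left h1 he.le) (by positivity)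
  have h3 : Real.exp t * (Real.exp t + 1) * ((Real.exp t + 1) ^ 3)⁻¹ = kk t := by
    unfold kk; field_simp
  linarith

/-- The second derivative of the Fermi–Dirac distribution converges to minus the
derivative of the Dirac delta at `μ`: for a bounded `C¹` function `g` with bounded
derivative, `∫ β² e^{β(ξ−μ)} (e^{β(ξ−μ)}−1) (e^{β(ξ−μ)}+1)⁻³ g(ξ) dξ → g'(μ)` as `β → ∞`. -/
theorem stmt_5 (g : ℝ → ℝ) (hg : ContDiff ℝ 1 g)
    (hgb : ∃ M : ℝ, ∀ x : ℝ, |g x| ≤ M)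
    (hg'b : ∃ M : ℝ, ∀ x : ℝ, |deriv g x| ≤ M) (μ : ℝ) :
    Tendsto (fun β : ℝ =>
        ∫ ξ : ℝ, β ^ 2 * Real.exp (β * (ξ - μ)) * (Real.exp (β * (ξ - μ)) - 1) *
          ((Real.exp (β * (ξ - μ)) + 1) ^ 3)⁻¹ * g ξ)
      atTop (nhds (deriv g μ)) := by
  obtain ⟨M, hM⟩ := hgb
  obtain ⟨M', hM'⟩ := hg'b
  have hg' : ∀ x, HasDerivAt g (deriv g x) x :=
    fun x => (hg.differentiable one_ne_zero x).hasDerivAt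
  have hg'c : Continuous (deriv g) := hg.continuous_deriv le_rfl
  have key : ∀ β : ℝ, 0 < β →
      (∫ ξ : ℝ, β ^ 2 * Real.exp (β * (ξ - μ)) * (Real.exp (β * (ξ - μ)) - 1) *
          ((Real.exp (β * (ξ - μ)) + 1) ^ 3)⁻¹ * g ξ)
      = ∫ t : ℝ, kk t * deriv g (μ + t / β) := by
    intro β hβ
    set u : ℝ → ℝ := fun ξ => β * kk (β * (ξ - μ)) with hu_def
    set u' : ℝ → ℝ := fun ξ => β ^ 2 * (Real.exp (β * (ξ - μ)) *
      (1 - Real.exp (β * (ξ - μ))) * ((Real.exp (β * (ξ - μ)) + 1) ^ 3)⁻¹) with hu'_def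
    have hlin : ∀ ξ : ℝ, HasDerivAt (fun ξ : ℝ => β * (ξ - μ)) β ξ := by
      intro ξ
      simpa using ((hasDerivAt_id ξ).sub_const μ).const_mul β
    have hu : ∀ ξ, HasDerivAt u (u' ξ) ξ := by
      intro ξ
      have h1 := (hasDerivAt_kk (β * (ξ - μ))).comp ξ (hlin ξ)
      have h2 := h1.const_mul β
      refine h2.congr_deriv ?_
      simp only [hu'_def]
      ring
    have hK : Integrable (fun ξ : ℝ => kk (β * (ξ - μ))) := by
      have h1 : Integrable (fun x : ℝ => kk (β * x)) :=
        integrable_kk.comp_mul_left' hβ.ne'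
      exact h1.comp_sub_right μ
    have hKc : Continuous (fun ξ : ℝ => kk (β * (ξ - μ))) := by
      apply continuous_kk.comp; continuity
    have hKnn : ∀ ξ : ℝ, 0 ≤ kk (β * (ξ - μ)) := fun ξ => kk_nonneg _
    have huv' : Integrable (u * deriv g) := by
      rw [Pi.mul_def]
      apply ((hK.const_mul (β * M')).mono'
        (((continuous_const.mul hKc).mul hg'c).aestronglyMeasurable))
      refine ae_of_all _ fun ξ => ?_
      simp only [Pi.mul_apply]
      rw [Real.norm_eq_abs, abs_mul, abs_mul, abs_of_pos hβ,
        abs_of_nonneg (hKnn ξ)]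
      have h := hM' ξ
      have hk := hKnn ξ
      nlinarith [mul_le_mul_of_nonneg_left h (mul_nonneg hβ.le hk)]
    have hu'v : Integrable (u' * g) := by
      rw [Pi.mul_def]
      have hu'c : Continuous u' := by
        simp only [hu'_def]
        apply continuous_const.mul
        apply (Continuous.mul (by continuity) (by continuity)).mul
        exact Continuous.inv₀ (by continuity) (fun ξ => by positivity)
      apply ((hK.const_mul (β ^ 2 * M)).mono' (hu'c.mul hg.continuous).aestronglyMeasurable)
      refine ae_of_all _ fun ξ => ?_
      simp only [hu'_def]
      simp only [Pi.mul_apply]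
      rw [Real.norm_eq_abs, abs_mul, abs_mul, abs_of_nonneg (by positivity : (0:ℝ) ≤ β ^ 2)]
      have h1 := abs_kk'_le (β * (ξ - μ))
      have h2 := hM ξ
      have h4 := abs_nonneg (g ξ)
      have hk := hKnn ξ
      nlinarith [mul_le_mul_of_nonneg_left
        (mul_le_mul h1 h2 h4 hk) (sq_nonneg β)]
    have huv : Integrable (u * g) := by
      rw [Pi.mul_def]
      apply ((hK.const_mul (β * M)).mono'
        (((continuous_const.mul hKc).mul hg.continuous).aestronglyMeasurable))
      refine ae_of_all _ fun ξ => ?_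
      simp only [Pi.mul_apply]
      rw [Real.norm_eq_abs, abs_mul, abs_mul, abs_of_pos hβ,
        abs_of_nonneg (hKnn ξ)]
      have h := hM ξ
      have hk := hKnn ξ
      nlinarith [mul_le_mul_of_nonneg_left h (mul_nonneg hβ.le hk)]
    have hibp := MeasureTheory.integral_mul_deriv_eq_deriv_mul_of_integrable
      (fun x _ => hu x) (fun x _ => hg' x) huv' hu'v huv
    have horig : (∫ ξ : ℝ, β ^ 2 * Real.exp (β * (ξ - μ)) * (Real.exp (β * (ξ - μ)) - 1) *
        ((Real.exp (β * (ξ - μ)) + 1) ^ 3)⁻¹ * g ξ) = - ∫ ξ : ℝ, u' ξ * g ξ := by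
      rw [← integral_neg]
      congr 1
      ext ξ
      simp only [hu'_def]
      ring
    have hcv : (∫ ξ : ℝ, u ξ * deriv g ξ) = ∫ t : ℝ, kk t * deriv g (μ + t / β) := by
      have h1 : ∀ ξ : ℝ, u ξ * deriv g ξ =
          β * (kk (β * (ξ - μ)) * deriv g (μ + (β * (ξ - μ)) / β)) := by
        intro ξ
        rw [mul_div_cancel_left₀ _ hβ.ne']
        have e1 : μ + (ξ - μ) = ξ := by ring
        rw [e1]
        simp only [hu_def]
        ring
      simp_rw [h1]
      rw [integral_const_mul]
      have h2 : (∫ ξ : ℝ, kk (β * (ξ - μ)) * deriv g (μ + (β * (ξ - μ)) / β))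
          = ∫ x : ℝ, kk (β * x) * deriv g (μ + (β * x) / β) :=
        integral_sub_right_eq_self (fun x => kk (β * x) * deriv g (μ + (β * x) / β)) μ
      rw [h2, Measure.integral_comp_mul_left (fun t => kk t * deriv g (μ + t / β)) β,
        abs_inv, abs_of_pos hβ, smul_eq_mul, ← mul_assoc,
        mul_inv_cancel₀ hβ.ne', one_mul]
    rw [horig, ← hibp, hcv]
  have hlim : (∫ t : ℝ, kk t * deriv g μ) = deriv g μ := by
    rw [integral_mul_const, integral_kk, one_mul]
  have main : Tendsto (fun β : ℝ => ∫ t : ℝ, kk t * deriv g (μ + t / β)) atTop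
      (𝓝 (deriv g μ)) := by
    rw [← hlim]
    apply tendsto_integral_filter_of_dominated_convergence (bound := fun t => kk t * M')
    · refine Eventually.of_forall fun β => ?_
      exact (continuous_kk.mul (hg'c.comp (by continuity))).aestronglyMeasurable
    · refine Eventually.of_forall fun β => ae_of_all _ fun t => ?_
      rw [Real.norm_eq_abs, abs_mul, abs_of_nonneg (kk_nonneg t)]
      exact mul_le_mul_of_nonneg_left (hM' _) (kk_nonneg t)
    · exact integrable_kk.mul_const M'
    · refine ae_of_all _ fun t => ?_
      have h1 : Tendsto (fun β : ℝ => μ + t / β) atTop (𝓝 μ) := by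
        have := (tendsto_const_nhds (x := t)).div_atTop (tendsto_id (α := ℝ))
        simpa using tendsto_const_nhds.add this
      exact ((hg'c.continuousAt.tendsto).comp h1).const_mul (kk t)
  apply main.congr'
  filter_upwards [eventually_gt_atTop 0] with β hβ
  exact (key β hβ).symm
end

section
/- Let E₀ ≤ a < b be real numbers and ρ₀ > 0. Let n : ℝ → ℝ be continuous and nondecreasing, with n(λ) = 0 for λ ≤ E₀, n(λ) = ρ₀ for all λ ∈ [a,b], and n(λ) ≤ C₀(1 + |λ|)^{3/2} for some C₀ > 0. Assume there exist δ > 0 and c > 0 such that n(a) − n(λ) ≥ c(a − λ)³ for λ ∈ [a − δ, a] and n(λ) − n(b) ≥ c(λ − b)³ for λ ∈ [b, b + δ]. Suppose μ : (0,∞) → ℝ satisfies for every β > 0 the equation ∫_ℝ β·e^{β(λ−μ(β))}·(e^{β(λ−μ(β))} + 1)⁻²·n(λ) dλ = ρ₀. Then a ≤ liminf_{β→∞} μ(β) ≤ limsup_{β→∞} μ(β) ≤ b. -/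
open Filter Real MeasureTheory Topology

set_option maxHeartbeats 1000000

private lemma cont_g (β m : ℝ) :
    Continuous fun x : ℝ => β * Real.exp (β * (x - m)) * ((Real.exp (β * (x - m)) + 1) ^ 2)⁻¹ := by
  have h : ∀ x : ℝ, (Real.exp (β * (x - m)) + 1) ^ 2 ≠ 0 := fun x => by positivity
  apply Continuous.mul
  · exact continuous_const.mul (continuous_const.mul (continuous_id.sub continuous_const)).rexp
  · exact Continuous.inv₀ (((continuous_const.mul (continuous_id.sub continuous_const)).rexp.add continuous_const).pow 2) h

private lemma ftc_g (β m u v : ℝ) :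
    (∫ x in u..v, β * Real.exp (β * (x - m)) * ((Real.exp (β * (x - m)) + 1) ^ 2)⁻¹)
      = (Real.exp (β * (u - m)) + 1)⁻¹ - (Real.exp (β * (v - m)) + 1)⁻¹ := by
  have hderiv : ∀ x ∈ Set.uIcc u v,
      HasDerivAt (fun y => -(Real.exp (β * (y - m)) + 1)⁻¹)
        (β * Real.exp (β * (x - m)) * ((Real.exp (β * (x - m)) + 1) ^ 2)⁻¹) x := by
    intro x _
    have h1 : HasDerivAt (fun y : ℝ => β * (y - m)) β x := by
      simpa using ((hasDerivAt_id x).sub_const m).const_mul β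
    have hne : Real.exp (β * (x - m)) + 1 ≠ 0 := by positivity
    have h4 : HasDerivAt (fun y => -(Real.exp (β * (y - m)) + 1)⁻¹) _ x := ((h1.exp.add_const 1).inv hne).neg
    convert h4 using 1
    field_simp
  rw [intervalIntegral.integral_eq_sub_of_hasDerivAt hderiv
    ((cont_g β m).intervalIntegrable u v)]
  ring

private lemma ftc_exp (r v w : ℝ) (hr : r ≠ 0) :
    (∫ x in v..w, Real.exp (-(r * (x - v))))
      = r⁻¹ * (1 - Real.exp (-(r * (w - v)))) := by
  have hderiv : ∀ x ∈ Set.uIcc v w,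
      HasDerivAt (fun y => -(r⁻¹ * Real.exp (-(r * (y - v)))))
        (Real.exp (-(r * (x - v)))) x := by
    intro x _
    have h1 : HasDerivAt (fun y : ℝ => -(r * (y - v))) (-r) x := by
      have h : HasDerivAt (fun y : ℝ => -(r * (y - v))) _ x := (((hasDerivAt_id x).sub_const v).const_mul r).neg
      simpa using h
    have h2 : HasDerivAt (fun y => -(r⁻¹ * Real.exp (-(r * (y - v))))) _ x := (h1.exp.const_mul r⁻¹).neg
    convert h2 using 1
    field_simp
  rw [intervalIntegral.integral_eq_sub_of_hasDerivAt hderiv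
    (((continuous_const.mul (continuous_id.sub continuous_const)).neg.rexp).intervalIntegrable v w)]
  have : v - v = 0 := by ring
  rw [this]
  simp only [mul_zero, neg_zero, Real.exp_zero, mul_one]
  ring

/-- Localization of the chemical potential in a spectral gap `[a,b]`:
`a ≤ liminf_{β→∞} μ(β) ≤ limsup_{β→∞} μ(β) ≤ b`. -/
theorem stmt_10 (E₀ a b ρ₀ : ℝ) (hE₀a : E₀ ≤ a) (hab : a < b) (hρ₀ : 0 < ρ₀)
    (n : ℝ → ℝ) (hcont : Continuous n) (hmono : Monotone n)
    (hzero : ∀ l : ℝ, l ≤ E₀ → n l = 0)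
    (hgap : ∀ l ∈ Set.Icc a b, n l = ρ₀)
    (C₀ : ℝ) (hC₀ : 0 < C₀)
    (hbound : ∀ l : ℝ, n l ≤ C₀ * (1 + |l|) ^ ((3 : ℝ) / 2))
    (δ c : ℝ) (hδ : 0 < δ) (hc : 0 < c)
    (hedge_a : ∀ l ∈ Set.Icc (a - δ) a, n a - n l ≥ c * (a - l) ^ 3)
    (hedge_b : ∀ l ∈ Set.Icc b (b + δ), n l - n b ≥ c * (l - b) ^ 3)
    (μ : ℝ → ℝ)
    (hμ : ∀ β > (0 : ℝ),
      ∫ l : ℝ, β * Real.exp (β * (l - μ β)) * ((Real.exp (β * (l - μ β)) + 1) ^ 2)⁻¹ * n l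
        = ρ₀) :
    a ≤ Filter.liminf μ atTop ∧ Filter.liminf μ atTop ≤ Filter.limsup μ atTop ∧
      Filter.limsup μ atTop ≤ b := by
  have hn_nonneg : ∀ l, 0 ≤ n l := by
    intro l
    rcases le_total l E₀ with h | h
    · exact (hzero l h).ge
    · have h2 := hmono h
      rw [hzero E₀ le_rfl] at h2
      exact h2
  -- Upper bound: eventually μ β ≤ b + ε
  have key_ub : ∀ ε : ℝ, 0 < ε → ε ≤ δ → ∀ᶠ β in atTop, μ β ≤ b + ε := by
    intro ε hε hεδ
    have hnb : n b = ρ₀ := hgap b ⟨hab.le, le_rfl⟩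
    have hedge := hedge_b (b + ε / 2) ⟨by linarith, by linarith⟩
    have heq : b + ε / 2 - b = ε / 2 := by ring
    rw [heq, hnb] at hedge
    have hρ₀n₀ : ρ₀ < n (b + ε / 2) := by nlinarith [pow_pos (half_pos hε) 3]
    have hθ : Tendsto
        (fun β : ℝ => ((Real.exp (-(β * (ε / 2))) + 1)⁻¹ - (Real.exp (β * 1) + 1)⁻¹)
          * n (b + ε / 2)) atTop (𝓝 (n (b + ε / 2))) := by
      have t1 : Tendsto (fun β : ℝ => Real.exp (-(β * (ε / 2)))) atTop (𝓝 0) :=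
        Real.tendsto_exp_atBot.comp
          (tendsto_neg_atTop_atBot.comp (tendsto_id.atTop_mul_const (half_pos hε)))
      have t1' : Tendsto (fun β : ℝ => (Real.exp (-(β * (ε / 2))) + 1)⁻¹) atTop (𝓝 1) := by
        have := ((t1.add tendsto_const_nhds).inv₀ (by norm_num) :
          Tendsto (fun β : ℝ => (Real.exp (-(β * (ε / 2))) + 1)⁻¹) atTop (𝓝 ((0 + 1)⁻¹)))
        simpa using this
      have t2 : Tendsto (fun β : ℝ => (Real.exp (β * 1) + 1)⁻¹) atTop (𝓝 0) := by
        apply Filter.Tendsto.inv_tendsto_atTop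
        apply tendsto_atTop_add_const_right
        exact Real.tendsto_exp_atTop.comp (tendsto_id.atTop_mul_const one_pos)
      have := (t1'.sub t2).mul_const (n (b + ε / 2))
      simpa using this
    filter_upwards [hθ.eventually (eventually_gt_nhds hρ₀n₀), eventually_gt_atTop (0 : ℝ)]
      with β hθβ hβ
    by_contra hcon
    push_neg at hcon
    set m := μ β with hm
    have hμβ := hμ β hβ
    set H : ℝ → ℝ :=
      fun l => β * Real.exp (β * (l - m)) * ((Real.exp (β * (l - m)) + 1) ^ 2)⁻¹ * n l with hH
    have hHnn : ∀ l, 0 ≤ H l := by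
      intro l
      exact mul_nonneg (by positivity) (hn_nonneg l)
    have hHcont : Continuous H := (cont_g β m).mul hcont
    have hHint : Integrable H := by
      by_contra hni
      rw [integral_undef hni] at hμβ
      linarith
    have huv : m - ε / 2 ≤ m + 1 := by linarith
    have hsub : (∫ l in Set.Ioc (m - ε / 2) (m + 1), H l) ≤ ρ₀ := by
      rw [← hμβ]
      exact setIntegral_le_integral hHint (ae_of_all _ hHnn)
    rw [← intervalIntegral.integral_of_le huv] at hsub
    have hmono_int :
        (∫ l in (m - ε / 2)..(m + 1),
            β * Real.exp (β * (l - m)) * ((Real.exp (β * (l - m)) + 1) ^ 2)⁻¹ * n (b + ε / 2))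
          ≤ ∫ l in (m - ε / 2)..(m + 1), H l := by
      apply intervalIntegral.integral_mono_on huv
        (((cont_g β m).mul continuous_const).intervalIntegrable _ _)
        (hHcont.intervalIntegrable _ _)
      intro x hx
      have hxg : b + ε / 2 ≤ x := by
        have := hx.1
        linarith
      exact mul_le_mul_of_nonneg_left (hmono hxg) (by positivity)
    have hval :
        (∫ l in (m - ε / 2)..(m + 1),
            β * Real.exp (β * (l - m)) * ((Real.exp (β * (l - m)) + 1) ^ 2)⁻¹ * n (b + ε / 2))
          = ((Real.exp (-(β * (ε / 2))) + 1)⁻¹ - (Real.exp (β * 1) + 1)⁻¹) * n (b + ε / 2) := by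
      rw [intervalIntegral.integral_mul_const, ftc_g,
        show β * (m - ε / 2 - m) = -(β * (ε / 2)) from by ring,
        show β * (m + 1 - m) = β * 1 from by ring]
    linarith [hval ▸ hmono_int]
  -- Lower bound: eventually a - ε ≤ μ β
  have key_lb : ∀ ε : ℝ, 0 < ε → ε ≤ δ → ∀ᶠ β in atTop, a - ε ≤ μ β := by
    intro ε hε hεδ
    have hna : n a = ρ₀ := hgap a ⟨le_rfl, hab.le⟩
    have hedge := hedge_a (a - ε / 2) ⟨by linarith, by linarith⟩
    have heq : a - (a - ε / 2) = ε / 2 := by ring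
    rw [heq, hna] at hedge
    set v : ℝ := a - ε / 2 with hv
    set η : ℝ := c * (ε / 2) ^ 3 with hη
    have hn₁ : n v ≤ ρ₀ - η := by linarith
    have hηpos : 0 < η := by positivity
    set K : ℝ := C₀ * (2 * (1 + |v|) ^ 2 + 8) with hK
    have hKpos : 0 < K := by rw [hK]; positivity
    clear_value v η K
    have hev : ∀ᶠ β : ℝ in atTop, 2 * K * Real.exp (-(β * (ε / 2))) < η := by
      have t1 : Tendsto (fun β : ℝ => 2 * K * Real.exp (-(β * (ε / 2)))) atTop (𝓝 0) := by
        have := (Real.tendsto_exp_atBot.comp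
          (tendsto_neg_atTop_atBot.comp (tendsto_id.atTop_mul_const (half_pos hε)))).const_mul
          (2 * K)
        simpa using this
      exact t1.eventually (eventually_lt_nhds hηpos)
    filter_upwards [hev, eventually_ge_atTop (2 : ℝ)] with β hevβ hβ2
    have hβ : (0 : ℝ) < β := by linarith
    by_contra hcon
    push_neg at hcon
    set m := μ β with hm
    have hμβ := hμ β hβ
    set H : ℝ → ℝ :=
      fun l => β * Real.exp (β * (l - m)) * ((Real.exp (β * (l - m)) + 1) ^ 2)⁻¹ * n l with hH
    have hHnn : ∀ l, 0 ≤ H l := by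
      intro l
      exact mul_nonneg (by positivity) (hn_nonneg l)
    have hHcont : Continuous H := (cont_g β m).mul hcont
    have hHint : Integrable H := by
      by_contra hni
      rw [integral_undef hni] at hμβ
      linarith
    have hsplit : (∫ l in Set.Iic v, H l) + (∫ l in Set.Ioi v, H l) = ρ₀ := by
      rw [← hμβ]
      exact intervalIntegral.integral_Iic_add_Ioi hHint.integrableOn hHint.integrableOn
    -- Left piece
    have hIic : (∫ l in Set.Iic v, H l) ≤ ρ₀ - η := by
      refine le_of_tendsto
        (intervalIntegral_tendsto_integral_Iic v hHint.integrableOn tendsto_id) ?_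
      filter_upwards [eventually_le_atBot v] with u huv
      calc (∫ l in u..v, H l)
          ≤ ∫ l in u..v,
              β * Real.exp (β * (l - m)) * ((Real.exp (β * (l - m)) + 1) ^ 2)⁻¹ * n v := by
            apply intervalIntegral.integral_mono_on huv (hHcont.intervalIntegrable _ _)
              (((cont_g β m).mul continuous_const).intervalIntegrable _ _)
            intro x hx
            exact mul_le_mul_of_nonneg_left (hmono hx.2) (by positivity)
        _ = ((Real.exp (β * (u - m)) + 1)⁻¹ - (Real.exp (β * (v - m)) + 1)⁻¹) * n v := by
            rw [intervalIntegral.integral_mul_const, ftc_g]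
        _ ≤ ρ₀ - η := by
            have h1 : (Real.exp (β * (u - m)) + 1)⁻¹ ≤ 1 := by
              rw [inv_le_one_iff₀]
              right
              linarith [Real.exp_pos (β * (u - m))]
            have h2 : (0 : ℝ) ≤ (Real.exp (β * (v - m)) + 1)⁻¹ := by positivity
            have h3 : 0 ≤ n v := hn_nonneg v
            nlinarith [mul_nonneg h3 h2, mul_nonneg h3 (sub_nonneg.mpr h1)]
    -- Right piece
    have hmlt : m < v - ε / 2 := by
      rw [hv]
      linarith
    have pointwise : ∀ x, v ≤ x →
        H x ≤ (K * Real.exp (-(β * (ε / 2))) * β) * Real.exp (-((β - 1) * (x - v))) := by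
      intro x hx
      have hs0 : (0 : ℝ) ≤ x - v := by linarith
      have hb1 : Real.exp (β * (x - m)) * ((Real.exp (β * (x - m)) + 1) ^ 2)⁻¹
          ≤ Real.exp (-(β * (x - m))) := by
        have hp : (0 : ℝ) < (Real.exp (β * (x - m)) + 1) ^ 2 := by positivity
        have he : (0 : ℝ) < Real.exp (β * (x - m)) := Real.exp_pos _
        rw [Real.exp_neg, ← div_eq_mul_inv, ← one_div, div_le_div_iff₀ hp he]
        nlinarith [he]
      have hnx : n x ≤ K * Real.exp (x - v) := by
        have h1 : n x ≤ C₀ * (1 + |x|) ^ ((3 : ℝ) / 2) := hbound x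
        have hx1 : (1 : ℝ) ≤ 1 + |x| := by linarith [abs_nonneg x]
        have h2 : (1 + |x|) ^ ((3 : ℝ) / 2) ≤ (1 + |x|) ^ ((2 : ℕ) : ℝ) :=
          Real.rpow_le_rpow_of_exponent_le hx1 (by norm_num)
        rw [Real.rpow_natCast] at h2
        have h4 : |x| ≤ |v| + (x - v) := by
          calc |x| = |v + (x - v)| := by ring_nf
            _ ≤ |v| + |x - v| := abs_add_le _ _
            _ = |v| + (x - v) := by rw [abs_of_nonneg hs0]
        have h5 : (1 + |x|) ^ 2 ≤ 2 * (1 + |v|) ^ 2 + 2 * (x - v) ^ 2 := by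
          nlinarith [abs_nonneg x, abs_nonneg v, sq_nonneg ((1 + |v|) - (x - v))]
        have h6 : (x - v) ^ 2 ≤ 4 * Real.exp (x - v) := by
          have hes : Real.exp ((x - v) / 2) * Real.exp ((x - v) / 2) = Real.exp (x - v) := by
            rw [← Real.exp_add]
            ring_nf
          have hle : (x - v) / 2 + 1 ≤ Real.exp ((x - v) / 2) := Real.add_one_le_exp _
          nlinarith [mul_le_mul hle hle (by linarith) (Real.exp_nonneg ((x - v) / 2)), hs0]
        have he1 : (1 : ℝ) ≤ Real.exp (x - v) := Real.one_le_exp hs0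
        calc n x ≤ C₀ * (1 + |x|) ^ ((3 : ℝ) / 2) := h1
          _ ≤ C₀ * (1 + |x|) ^ 2 := mul_le_mul_of_nonneg_left h2 hC₀.le
          _ ≤ C₀ * (2 * (1 + |v|) ^ 2 + 2 * (x - v) ^ 2) := mul_le_mul_of_nonneg_left h5 hC₀.le
          _ ≤ C₀ * (2 * (1 + |v|) ^ 2 + 8 * Real.exp (x - v)) :=
              mul_le_mul_of_nonneg_left (by linarith) hC₀.le
          _ ≤ K * Real.exp (x - v) := by
              rw [hK]
              nlinarith [mul_le_mul_of_nonneg_left he1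
                (mul_nonneg (by norm_num : (0:ℝ) ≤ 2) (sq_nonneg (1 + |v|))), hC₀.le]
      have hexp : Real.exp (-(β * (x - m)))
          ≤ Real.exp (-(β * (ε / 2))) * Real.exp (-(β * (x - v))) := by
        rw [← Real.exp_add]
        apply Real.exp_le_exp.mpr
        nlinarith [hmlt, hβ]
      calc H x = β * (Real.exp (β * (x - m)) * ((Real.exp (β * (x - m)) + 1) ^ 2)⁻¹) * n x := by
            rw [hH]
            ring
        _ ≤ β * Real.exp (-(β * (x - m))) * n x := by
            have h' := mul_le_mul_of_nonneg_left hb1 hβ.le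
            exact mul_le_mul_of_nonneg_right h' (hn_nonneg x)
        _ ≤ β * (Real.exp (-(β * (ε / 2))) * Real.exp (-(β * (x - v)))) * (K * Real.exp (x - v)) := by
            apply mul_le_mul (mul_le_mul_of_nonneg_left hexp hβ.le) hnx (hn_nonneg x)
              (by positivity)
        _ = (K * Real.exp (-(β * (ε / 2))) * β) * Real.exp (-((β - 1) * (x - v))) := by
            rw [show -((β - 1) * (x - v)) = -(β * (x - v)) + (x - v) from by ring, Real.exp_add]
            ring
    have hIoi : (∫ l in Set.Ioi v, H l) < η := by
      have hle : (∫ l in Set.Ioi v, H l) ≤ 2 * K * Real.exp (-(β * (ε / 2))) := by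
        refine le_of_tendsto
          (intervalIntegral_tendsto_integral_Ioi v hHint.integrableOn tendsto_id) ?_
        filter_upwards [eventually_ge_atTop v] with w hvw
        have hβ1 : (0 : ℝ) < β - 1 := by linarith
        calc (∫ l in v..w, H l)
            ≤ ∫ l in v..w,
                (K * Real.exp (-(β * (ε / 2))) * β) * Real.exp (-((β - 1) * (l - v))) := by
              apply intervalIntegral.integral_mono_on hvw (hHcont.intervalIntegrable _ _)
                ((continuous_const.mul
                  ((continuous_const.mul (continuous_id.sub continuous_const)).neg.rexp)).intervalIntegrable _ _)
              intro x hx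
              exact pointwise x hx.1
          _ = (K * Real.exp (-(β * (ε / 2))) * β)
                * ((β - 1)⁻¹ * (1 - Real.exp (-((β - 1) * (w - v))))) := by
              rw [intervalIntegral.integral_const_mul, ftc_exp _ _ _ hβ1.ne']
          _ ≤ 2 * K * Real.exp (-(β * (ε / 2))) := by
              have he' : Real.exp (-((β - 1) * (w - v))) ≤ 1 := by
                calc Real.exp (-((β - 1) * (w - v))) ≤ Real.exp 0 :=
                      Real.exp_le_exp.mpr (by nlinarith [hβ1, sub_nonneg.mpr hvw])
                  _ = 1 := Real.exp_zero
              have he'' : (0 : ℝ) ≤ Real.exp (-((β - 1) * (w - v))) := (Real.exp_pos _).le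
              have hfac : β * ((β - 1)⁻¹ * (1 - Real.exp (-((β - 1) * (w - v))))) ≤ 2 := by
                have hstep : (β - 1)⁻¹ * (1 - Real.exp (-((β - 1) * (w - v)))) ≤ (β - 1)⁻¹ * 1 :=
                  mul_le_mul_of_nonneg_left (by linarith) (inv_nonneg.mpr hβ1.le)
                have h2' : β * (β - 1)⁻¹ ≤ 2 := by
                  rw [← div_eq_mul_inv, div_le_iff₀ hβ1]
                  linarith
                calc β * ((β - 1)⁻¹ * (1 - Real.exp (-((β - 1) * (w - v)))))
                    ≤ β * ((β - 1)⁻¹ * 1) := mul_le_mul_of_nonneg_left hstep hβ.le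
                  _ = β * (β - 1)⁻¹ := by ring
                  _ ≤ 2 := h2'
              have hKe : (0 : ℝ) ≤ K * Real.exp (-(β * (ε / 2))) := by positivity
              calc (K * Real.exp (-(β * (ε / 2))) * β)
                    * ((β - 1)⁻¹ * (1 - Real.exp (-((β - 1) * (w - v)))))
                  = (K * Real.exp (-(β * (ε / 2))))
                    * (β * ((β - 1)⁻¹ * (1 - Real.exp (-((β - 1) * (w - v)))))) := by ring
                _ ≤ (K * Real.exp (-(β * (ε / 2)))) * 2 := mul_le_mul_of_nonneg_left hfac hKe
                _ = 2 * K * Real.exp (-(β * (ε / 2))) := by ring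
      linarith
    linarith
  -- Assemble
  have hbdd_above : IsBoundedUnder (· ≤ ·) atTop μ :=
    ⟨b + δ, eventually_map.2 (key_ub δ hδ le_rfl)⟩
  have hbdd_below : IsBoundedUnder (· ≥ ·) atTop μ :=
    ⟨a - δ, eventually_map.2 (key_lb δ hδ le_rfl)⟩
  refine ⟨?_, liminf_le_limsup hbdd_above hbdd_below, ?_⟩
  · have : ∀ ε : ℝ, 0 < ε → a ≤ Filter.liminf μ atTop + ε := by
      intro ε hε
      set ε' := min ε δ with hε'
      have hε'pos : 0 < ε' := lt_min hε hδ
      have h1 : a - ε' ≤ Filter.liminf μ atTop :=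
        le_liminf_of_le hbdd_above.isCoboundedUnder_ge (key_lb ε' hε'pos (min_le_right _ _))
      have : ε' ≤ ε := min_le_left _ _
      linarith
    linarith [le_of_forall_pos_le_add this]
  · apply le_of_forall_pos_le_add
    intro ε hε
    set ε' := min ε δ with hε'
    have hε'pos : 0 < ε' := lt_min hε hδ
    have h1 : Filter.limsup μ atTop ≤ b + ε' :=
      limsup_le_of_le hbdd_below.isCoboundedUnder_le
        ((key_ub ε' hε'pos (min_le_right _ _)).mono fun β h => h)
    have : ε' ≤ ε := min_le_left _ _
    linarith
end

section
/- Let E₀ ∈ ℝ and ρ₀ > 0. Let n : ℝ → ℝ be continuous and nondecreasing, with n(λ) = 0 for λ ≤ E₀ and n(λ) ≤ C₀(1 + |λ|)^{3/2} for some C₀ > 0. Suppose E_M ∈ ℝ and η > 0 are such that n(E_M) = ρ₀ and n is strictly increasing on (E_M − η, E_M + η). Suppose μ : (0,∞) → ℝ satisfies for every β > 0 the equation ∫_ℝ β·e^{β(λ−μ(β))}·(e^{β(λ−μ(β))} + 1)⁻²·n(λ) dλ = ρ₀. Then μ(β) converges to E_M as β → ∞. -/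
open Filter Real MeasureTheory Set


private lemma fd_deriv (β m x : ℝ) :
    HasDerivAt (fun l => -(Real.exp (β*(l-m)) + 1)⁻¹)
      (β * Real.exp (β*(x-m)) * ((Real.exp (β*(x-m)) + 1)^2)⁻¹) x := by
  have h1 : HasDerivAt (fun l : ℝ => β*(l-m)) β x := by
    simpa using ((hasDerivAt_id x).sub_const m).const_mul β
  have h2 := ((h1.exp.add_const 1).inv (by positivity)).neg
  refine h2.congr_deriv ?_
  have h3 : Real.exp (β*(x-m)) + 1 ≠ 0 := by positivity
  field_simp

private lemma fd_nonneg (β m : ℝ) (hβ : 0 ≤ β) (l : ℝ) :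
    0 ≤ β * Real.exp (β*(l-m)) * ((Real.exp (β*(l-m)) + 1)^2)⁻¹ := by positivity

private lemma fd_cont (β m : ℝ) :
    Continuous (fun l => β * Real.exp (β*(l-m)) * ((Real.exp (β*(l-m)) + 1)^2)⁻¹) := by
  have hc : Continuous fun l : ℝ => Real.exp (β*(l-m)) :=
    Real.continuous_exp.comp (continuous_const.mul (continuous_id.sub continuous_const))
  exact (continuous_const.mul hc).mul (((hc.add continuous_const).pow 2).inv₀ (fun l => by simp only [Pi.pow_apply, Pi.add_apply]; positivity))

private lemma lin_tendsto_atTop (β m : ℝ) (hβ : 0 < β) :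
    Tendsto (fun l : ℝ => β*(l-m)) atTop atTop := by
  have := (tendsto_atTop_add_const_right atTop (-m) tendsto_id).const_mul_atTop hβ
  simpa [sub_eq_add_neg] using this

private lemma fd_anti_tendsto_top (β m : ℝ) (hβ : 0 < β) :
    Tendsto (fun l => -(Real.exp (β*(l-m)) + 1)⁻¹) atTop (nhds 0) := by
  rw [show (0:ℝ) = -0 by norm_num]
  exact (tendsto_inv_atTop_zero.comp (tendsto_atTop_add_const_right atTop 1
    (Real.tendsto_exp_atTop.comp (lin_tendsto_atTop β m hβ)))).neg

private lemma fd_anti_tendsto_bot (β m : ℝ) (hβ : 0 < β) :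
    Tendsto (fun l => -(Real.exp (β*(l-m)) + 1)⁻¹) atBot (nhds (-1)) := by
  have h1 : Tendsto (fun l : ℝ => β*(l-m)) atBot atBot := by
    have := (tendsto_atBot_add_const_right atBot (-m) tendsto_id).const_mul_atBot hβ
    simpa [sub_eq_add_neg] using this
  have h2 : Tendsto (fun l : ℝ => Real.exp (β*(l-m)) + 1) atBot (nhds 1) := by
    simpa using (Real.tendsto_exp_atBot.comp h1).add_const 1
  have := (h2.inv₀ (by norm_num)).neg
  simpa using this

private lemma fd_integrableOn_Ioi (β m a : ℝ) (hβ : 0 < β) :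
    IntegrableOn (fun l => β * Real.exp (β*(l-m)) * ((Real.exp (β*(l-m)) + 1)^2)⁻¹) (Set.Ioi a) :=
  integrableOn_Ioi_deriv_of_nonneg' (fun x _ => fd_deriv β m x)
    (fun x _ => fd_nonneg β m hβ.le x) (fd_anti_tendsto_top β m hβ)

private lemma fd_integral_Ioi (β m a : ℝ) (hβ : 0 < β) :
    ∫ l in Set.Ioi a, β * Real.exp (β*(l-m)) * ((Real.exp (β*(l-m)) + 1)^2)⁻¹
      = (Real.exp (β*(a-m)) + 1)⁻¹ := by
  rw [integral_Ioi_of_hasDerivAt_of_nonneg' (fun x _ => fd_deriv β m x)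
    (fun x _ => fd_nonneg β m hβ.le x) (fd_anti_tendsto_top β m hβ)]
  simp

private lemma fd_integrableOn_Iic (β m a : ℝ) (hβ : 0 < β) :
    IntegrableOn (fun l => β * Real.exp (β*(l-m)) * ((Real.exp (β*(l-m)) + 1)^2)⁻¹) (Set.Iic a) := by
  apply integrableOn_Iic_of_intervalIntegral_norm_bounded 1 a
    (fun y => ((fd_cont β m).integrableOn_Ioc)) tendsto_id
  filter_upwards with y
  simp only [id_eq]
  have hnn : ∀ x, ‖β * Real.exp (β*(x-m)) * ((Real.exp (β*(x-m)) + 1)^2)⁻¹‖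
      = β * Real.exp (β*(x-m)) * ((Real.exp (β*(x-m)) + 1)^2)⁻¹ :=
    fun x => Real.norm_of_nonneg (fd_nonneg β m hβ.le x)
  rw [show (fun x => ‖β * Real.exp (β*(x-m)) * ((Real.exp (β*(x-m)) + 1)^2)⁻¹‖)
      = (fun x => β * Real.exp (β*(x-m)) * ((Real.exp (β*(x-m)) + 1)^2)⁻¹) from funext hnn]
  rw [intervalIntegral.integral_eq_sub_of_hasDerivAt (fun x _ => fd_deriv β m x)
    ((fd_cont β m).intervalIntegrable _ _)]
  have h1 : (0:ℝ) < Real.exp (β*(y-m)) + 1 := by positivity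
  have h2 : (0:ℝ) < Real.exp (β*(a-m)) + 1 := by positivity
  have h3 : (Real.exp (β*(y-m)) + 1)⁻¹ ≤ 1 := by
    rw [inv_le_one_iff₀]; right; linarith [Real.exp_pos (β*(y-m))]
  have h4 : (0:ℝ) ≤ (Real.exp (β*(a-m)) + 1)⁻¹ := by positivity
  linarith

private lemma fd_integral_Iic (β m a : ℝ) (hβ : 0 < β) :
    ∫ l in Set.Iic a, β * Real.exp (β*(l-m)) * ((Real.exp (β*(l-m)) + 1)^2)⁻¹
      = 1 - (Real.exp (β*(a-m)) + 1)⁻¹ := by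
  rw [integral_Iic_of_hasDerivAt_of_tendsto' (fun x _ => fd_deriv β m x)
    (fd_integrableOn_Iic β m a hβ) (fd_anti_tendsto_bot β m hβ)]
  ring

private lemma poly_deriv (c a : ℝ) (hc : c ≠ 0) (x : ℝ) :
    HasDerivAt (fun t => -(Real.exp (-c*(t-a)) * ((1+(t-a))^2/c + 2*(1+(t-a))/c^2 + 2/c^3)))
      (Real.exp (-c*(x-a)) * (1+(x-a))^2) x := by
  have h1 : HasDerivAt (fun t : ℝ => t - a) 1 x := (hasDerivAt_id x).sub_const a
  have he : HasDerivAt (fun t => Real.exp (-c*(t-a))) (Real.exp (-c*(x-a)) * (-c)) x := by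
    simpa using (h1.const_mul (-c)).exp
  have h2 : HasDerivAt (fun t : ℝ => 1+(t-a)) 1 x := by simpa using h1.const_add 1
  have hp : HasDerivAt (fun t => ((1+(t-a))^2/c + 2*(1+(t-a))/c^2 + 2/c^3))
      (2*(1+(x-a))/c + 2/c^2) x := by
    have h3 := ((h2.pow 2).div_const c).add (((h2.const_mul 2)).div_const (c^2))
    have h4 := h3.add_const (2/c^3)
    refine h4.congr_deriv ?_
    ring
  have h5 := (he.mul hp).neg
  refine h5.congr_deriv ?_
  field_simp
  ring

private lemma poly_nonneg (c a l : ℝ) : 0 ≤ Real.exp (-c*(l-a)) * (1+(l-a))^2 := by positivity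

private lemma pow_exp_tendsto (c : ℝ) (hc : 0 < c) (k : ℕ) :
    Tendsto (fun s : ℝ => s^k * Real.exp (-(c*s))) atTop (nhds 0) := by
  have h1 := tendsto_pow_mul_exp_neg_atTop_nhds_zero k
  have h2 : Tendsto (fun s : ℝ => c*s) atTop atTop := tendsto_id.const_mul_atTop hc
  have h3 := (h1.comp h2).const_mul ((c^k)⁻¹)
  rw [mul_zero] at h3
  refine h3.congr fun s => ?_
  simp only [Function.comp]
  rw [mul_pow]
  field_simp

private lemma poly_tendsto (c a : ℝ) (hc : 0 < c) :
    Tendsto (fun t => -(Real.exp (-c*(t-a)) * ((1+(t-a))^2/c + 2*(1+(t-a))/c^2 + 2/c^3)))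
      atTop (nhds 0) := by
  have t0 := (pow_exp_tendsto c hc 0).const_mul (1/c + 2/c^2 + 2/c^3)
  have t1 := (pow_exp_tendsto c hc 1).const_mul (2/c + 2/c^2)
  have t2 := (pow_exp_tendsto c hc 2).const_mul (1/c)
  have hsum := ((t0.add t1).add t2).neg
  norm_num at hsum
  have hG : Tendsto (fun s : ℝ =>
      -(Real.exp (-(c*s)) * ((1+s)^2/c + 2*(1+s)/c^2 + 2/c^3))) atTop (nhds 0) := by
    refine hsum.congr fun s => ?_
    field_simp
    ring
  have hcomp : Tendsto (fun t : ℝ => t - a) atTop atTop :=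
    tendsto_atTop_add_const_right atTop (-a) tendsto_id
  have := hG.comp hcomp
  refine this.congr fun t => ?_
  simp only [Function.comp]
  ring_nf

private lemma poly_integrableOn (c a : ℝ) (hc : 0 < c) :
    IntegrableOn (fun t => Real.exp (-c*(t-a)) * (1+(t-a))^2) (Set.Ioi a) :=
  integrableOn_Ioi_deriv_of_nonneg' (fun x _ => poly_deriv c a hc.ne' x)
    (fun x _ => poly_nonneg c a x) (poly_tendsto c a hc)

private lemma poly_integral (c a : ℝ) (hc : 0 < c) :
    ∫ t in Set.Ioi a, Real.exp (-c*(t-a)) * (1+(t-a))^2 = 1/c + 2/c^2 + 2/c^3 := by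
  rw [integral_Ioi_of_hasDerivAt_of_nonneg' (fun x _ => poly_deriv c a hc.ne' x)
    (fun x _ => poly_nonneg c a x) (poly_tendsto c a hc)]
  norm_num

private lemma fd_le (β m l : ℝ) (hβ : 0 ≤ β) :
    β * Real.exp (β*(l-m)) * ((Real.exp (β*(l-m)) + 1)^2)⁻¹ ≤ β * Real.exp (-(β*(l-m))) := by
  set x := β*(l-m) with hx
  have h1 : (0:ℝ) < (Real.exp x + 1)^2 := by positivity
  have hv : Real.exp (-x) * Real.exp x = 1 := by
    rw [← Real.exp_add]; norm_num
  have key : Real.exp x * ((Real.exp x + 1)^2)⁻¹ ≤ Real.exp (-x) := by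
    rw [mul_inv_le_iff₀ h1]
    nlinarith [Real.exp_pos x, Real.exp_pos (-x)]
  calc β * Real.exp x * ((Real.exp x + 1)^2)⁻¹
      = β * (Real.exp x * ((Real.exp x + 1)^2)⁻¹) := by ring
    _ ≤ β * Real.exp (-x) := mul_le_mul_of_nonneg_left key hβ

private lemma one_abs_sq (b l : ℝ) (hl : b ≤ l) : (1+|l|)^2 ≤ (1+|b|)^2 * (1+(l-b))^2 := by
  have h1 : |l| ≤ |b| + (l - b) := by
    have := abs_add_le b (l-b)
    simp only [add_sub_cancel] at this
    have h2 : |l - b| = l - b := abs_of_nonneg (by linarith)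
    linarith
  have h3 : (0:ℝ) ≤ |b| := abs_nonneg b
  have h4 : (0:ℝ) ≤ l - b := by linarith
  have h5 : 1+|l| ≤ (1+|b|)*(1+(l-b)) := by nlinarith
  calc (1+|l|)^2 ≤ ((1+|b|)*(1+(l-b)))^2 := by
        apply pow_le_pow_left₀ (by positivity) h5
    _ = (1+|b|)^2 * (1+(l-b))^2 := by ring

private lemma gn_pointwise (β m C₀ b c s : ℝ) (hβ : 0 ≤ β) (hC₀ : 0 ≤ C₀) (n : ℝ → ℝ)
    (l : ℝ) (hl : b ≤ l) (hnl : n l ≤ C₀*(1+|l|)^2) (hn0 : 0 ≤ n l)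
    (hexp : s + c*(l-b) ≤ β*(l-m)) :
    (β * Real.exp (β*(l-m)) * ((Real.exp (β*(l-m)) + 1)^2)⁻¹) * n l
      ≤ (C₀ * β * (1+|b|)^2 * Real.exp (-s)) * (Real.exp (-c*(l-b)) * (1+(l-b))^2) := by
  have hk : β * Real.exp (β*(l-m)) * ((Real.exp (β*(l-m)) + 1)^2)⁻¹
      ≤ β * (Real.exp (-s) * Real.exp (-c*(l-b))) := by
    refine (fd_le β m l hβ).trans ?_
    have : Real.exp (-(β*(l-m))) ≤ Real.exp (-s) * Real.exp (-c*(l-b)) := by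
      rw [← Real.exp_add]
      exact Real.exp_le_exp.mpr (by linarith)
    exact mul_le_mul_of_nonneg_left this hβ
  have hn2 : n l ≤ C₀ * ((1+|b|)^2 * (1+(l-b))^2) :=
    hnl.trans (mul_le_mul_of_nonneg_left (one_abs_sq b l hl) hC₀)
  have hknn : 0 ≤ β * Real.exp (β*(l-m)) * ((Real.exp (β*(l-m)) + 1)^2)⁻¹ := by positivity
  calc (β * Real.exp (β*(l-m)) * ((Real.exp (β*(l-m)) + 1)^2)⁻¹) * n l
      ≤ (β * (Real.exp (-s) * Real.exp (-c*(l-b)))) * (C₀ * ((1+|b|)^2 * (1+(l-b))^2)) :=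
        mul_le_mul hk hn2 hn0 (by positivity)
    _ = (C₀ * β * (1+|b|)^2 * Real.exp (-s)) * (Real.exp (-c*(l-b)) * (1+(l-b))^2) := by ring

private lemma core_integrable (β m C₀ : ℝ) (hβ : 0 < β) (hC₀ : 0 ≤ C₀) (n : ℝ → ℝ)
    (hcont : Continuous n) (hmono : Monotone n) (hn0 : ∀ l, 0 ≤ n l)
    (hn2 : ∀ l, n l ≤ C₀*(1+|l|)^2) :
    Integrable (fun l => (β * Real.exp (β*(l-m)) * ((Real.exp (β*(l-m)) + 1)^2)⁻¹) * n l) := by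
  have hmeas : AEStronglyMeasurable
      (fun l => (β * Real.exp (β*(l-m)) * ((Real.exp (β*(l-m)) + 1)^2)⁻¹) * n l) volume :=
    ((fd_cont β m).mul hcont).aestronglyMeasurable
  have hIic : IntegrableOn
      (fun l => (β * Real.exp (β*(l-m)) * ((Real.exp (β*(l-m)) + 1)^2)⁻¹) * n l) (Set.Iic m) := by
    refine Integrable.mono' ((fd_integrableOn_Iic β m m hβ).const_mul (n m))
      hmeas.restrict ?_
    refine (ae_restrict_iff' measurableSet_Iic).mpr (ae_of_all _ fun l hl => ?_)
    rw [Real.norm_of_nonneg (mul_nonneg (fd_nonneg β m hβ.le l) (hn0 l)), mul_comm (n m)]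
    exact mul_le_mul_of_nonneg_left (hmono hl) (fd_nonneg β m hβ.le l)
  have hIoi : IntegrableOn
      (fun l => (β * Real.exp (β*(l-m)) * ((Real.exp (β*(l-m)) + 1)^2)⁻¹) * n l) (Set.Ioi m) := by
    refine Integrable.mono'
      ((poly_integrableOn (β/2) m (by positivity)).const_mul (C₀ * β * (1+|m|)^2 * Real.exp (-0)))
      hmeas.restrict ?_
    refine (ae_restrict_iff' measurableSet_Ioi).mpr (ae_of_all _ fun l hl => ?_)
    rw [Real.norm_of_nonneg (mul_nonneg (fd_nonneg β m hβ.le l) (hn0 l))]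
    refine gn_pointwise β m C₀ m (β/2) 0 hβ.le hC₀ n l (le_of_lt hl) (hn2 l) (hn0 l) ?_
    have h1 : m ≤ l := le_of_lt hl
    nlinarith
  rw [← integrableOn_univ, ← Set.Iic_union_Ioi (a := m)]
  exact hIic.union hIoi

private lemma core_upper (β m C₀ ρ₀ : ℝ) (hβ : 0 < β) (hC₀ : 0 ≤ C₀) (n : ℝ → ℝ)
    (hcont : Continuous n) (hmono : Monotone n) (hn0 : ∀ l, 0 ≤ n l)
    (hn2 : ∀ l, n l ≤ C₀*(1+|l|)^2)
    (heq : ∫ l : ℝ, (β * Real.exp (β*(l-m)) * ((Real.exp (β*(l-m)) + 1)^2)⁻¹) * n l = ρ₀)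
    (A : ℝ) : n A * (Real.exp (β*(A-m)) + 1)⁻¹ ≤ ρ₀ := by
  have hInt := core_integrable β m C₀ hβ hC₀ n hcont hmono hn0 hn2
  have h1 : n A * (Real.exp (β*(A-m)) + 1)⁻¹
      = ∫ l in Set.Ioi A, n A * (β * Real.exp (β*(l-m)) * ((Real.exp (β*(l-m)) + 1)^2)⁻¹) := by
    rw [integral_const_mul, fd_integral_Ioi β m A hβ]
  rw [h1, ← heq]
  have h2 : ∫ l in Set.Ioi A, n A * (β * Real.exp (β*(l-m)) * ((Real.exp (β*(l-m)) + 1)^2)⁻¹)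
      ≤ ∫ l in Set.Ioi A, (β * Real.exp (β*(l-m)) * ((Real.exp (β*(l-m)) + 1)^2)⁻¹) * n l := by
    refine setIntegral_mono_on ((fd_integrableOn_Ioi β m A hβ).const_mul (n A))
      hInt.integrableOn measurableSet_Ioi fun x hx => ?_
    rw [mul_comm]
    exact mul_le_mul_of_nonneg_left (hmono (le_of_lt hx)) (fd_nonneg β m hβ.le x)
  refine h2.trans ?_
  exact setIntegral_le_integral hInt
    (ae_of_all _ fun l => mul_nonneg (fd_nonneg β m hβ.le l) (hn0 l))

private lemma core_split (β m C₀ ρ₀ : ℝ) (hβ : 0 < β) (hC₀ : 0 ≤ C₀) (n : ℝ → ℝ)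
    (hcont : Continuous n) (hmono : Monotone n) (hn0 : ∀ l, 0 ≤ n l)
    (hn2 : ∀ l, n l ≤ C₀*(1+|l|)^2)
    (heq : ∫ l : ℝ, (β * Real.exp (β*(l-m)) * ((Real.exp (β*(l-m)) + 1)^2)⁻¹) * n l = ρ₀)
    (c : ℝ) :
    ρ₀ ≤ n c + ∫ l in Set.Ioi c, (β * Real.exp (β*(l-m)) * ((Real.exp (β*(l-m)) + 1)^2)⁻¹) * n l := by
  have hInt := core_integrable β m C₀ hβ hC₀ n hcont hmono hn0 hn2
  have hsplit := intervalIntegral.integral_Iic_add_Ioi (b := c) hInt.integrableOn hInt.integrableOn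
  rw [heq] at hsplit
  have h2 : ∫ l in Set.Iic c, (β * Real.exp (β*(l-m)) * ((Real.exp (β*(l-m)) + 1)^2)⁻¹) * n l
      ≤ n c := by
    have h3 : ∫ l in Set.Iic c, (β * Real.exp (β*(l-m)) * ((Real.exp (β*(l-m)) + 1)^2)⁻¹) * n l
        ≤ ∫ l in Set.Iic c, n c * (β * Real.exp (β*(l-m)) * ((Real.exp (β*(l-m)) + 1)^2)⁻¹) := by
      refine setIntegral_mono_on hInt.integrableOn
        ((fd_integrableOn_Iic β m c hβ).const_mul (n c)) measurableSet_Iic fun x hx => ?_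
      rw [mul_comm (n c)]
      exact mul_le_mul_of_nonneg_left (hmono hx) (fd_nonneg β m hβ.le x)
    rw [integral_const_mul, fd_integral_Iic β m c hβ] at h3
    refine h3.trans ?_
    have h4 : (0:ℝ) ≤ (Real.exp (β*(c-m)) + 1)⁻¹ := by positivity
    nlinarith [hn0 c]
  linarith

private lemma core_tail (β m C₀ δ R ρ₀ : ℝ) (hβ1 : 1 ≤ β) (hC₀ : 0 ≤ C₀) (hδ : 0 < δ)
    (hmR : |m| ≤ R) (n : ℝ → ℝ)
    (hcont : Continuous n) (hmono : Monotone n) (hn0 : ∀ l, 0 ≤ n l)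
    (hn2 : ∀ l, n l ≤ C₀*(1+|l|)^2) :
    ∫ l in Set.Ioi (m+δ), (β * Real.exp (β*(l-m)) * ((Real.exp (β*(l-m)) + 1)^2)⁻¹) * n l
      ≤ 26*C₀*(1+R)^2 * Real.exp (-(β*(δ/2))) := by
  have hβ : (0:ℝ) < β := lt_of_lt_of_le one_pos hβ1
  have hInt := core_integrable β m C₀ hβ hC₀ n hcont hmono hn0 hn2
  have hb2 : (0:ℝ) < β/2 := by positivity
  set K := C₀ * β * (1+|m|)^2 * Real.exp (-(β*(δ/2))) with hK
  have hKnn : 0 ≤ K := by positivity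
  have h1 : ∫ l in Set.Ioi (m+δ), (β * Real.exp (β*(l-m)) * ((Real.exp (β*(l-m)) + 1)^2)⁻¹) * n l
      ≤ ∫ l in Set.Ioi (m+δ), K * (Real.exp (-(β/2)*(l-m)) * (1+(l-m))^2) := by
    refine setIntegral_mono_on hInt.integrableOn
      (((poly_integrableOn (β/2) m hb2).mono_set (Set.Ioi_subset_Ioi (by linarith))).const_mul K)
      measurableSet_Ioi fun l hl => ?_
    refine gn_pointwise β m C₀ m (β/2) (β*(δ/2)) hβ.le hC₀ n l (by simp at hl; linarith) (hn2 l)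
      (hn0 l) ?_
    have h2 : m + δ ≤ l := le_of_lt hl
    have h3 : β*δ ≤ β*(l-m) := mul_le_mul_of_nonneg_left (by linarith) hβ.le
    linarith
  rw [integral_const_mul] at h1
  have h4 : ∫ l in Set.Ioi (m+δ), Real.exp (-(β/2)*(l-m)) * (1+(l-m))^2
      ≤ ∫ l in Set.Ioi m, Real.exp (-(β/2)*(l-m)) * (1+(l-m))^2 := by
    refine setIntegral_mono_set (poly_integrableOn (β/2) m hb2)
      (ae_of_all _ fun l => poly_nonneg (β/2) m l)
      (HasSubset.Subset.eventuallyLE (Set.Ioi_subset_Ioi (by linarith)))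
  rw [poly_integral (β/2) m hb2] at h4
  set V := 1/(β/2) + 2/(β/2)^2 + 2/(β/2)^3 with hV
  have hV0 : 0 ≤ V := by rw [hV]; positivity
  have hval : β * V ≤ 26 := by
    have heq2 : β * V = 2 + 8/β + 16/β^2 := by rw [hV]; field_simp; ring
    rw [heq2]
    have e2 : (8:ℝ)/β ≤ 8 := by rw [div_le_iff₀ hβ]; nlinarith
    have e3 : (16:ℝ)/β^2 ≤ 16 := by rw [div_le_iff₀ (by positivity)]; nlinarith
    linarith
  calc ∫ l in Set.Ioi (m+δ), (β * Real.exp (β*(l-m)) * ((Real.exp (β*(l-m)) + 1)^2)⁻¹) * n l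
      ≤ K * ∫ l in Set.Ioi (m+δ), Real.exp (-(β/2)*(l-m)) * (1+(l-m))^2 := h1
    _ ≤ K * V := mul_le_mul_of_nonneg_left h4 hKnn
    _ = (C₀ * (1+|m|)^2 * Real.exp (-(β*(δ/2)))) * (β * V) := by rw [hK]; ring
    _ ≤ (C₀ * (1+|m|)^2 * Real.exp (-(β*(δ/2)))) * 26 :=
        mul_le_mul_of_nonneg_left hval (by positivity)
    _ ≤ (C₀ * (1+R)^2 * Real.exp (-(β*(δ/2)))) * 26 := by
        gcongr
    _ = 26*C₀*(1+R)^2 * Real.exp (-(β*(δ/2))) := by ring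

private lemma core_apriori (β m C₀ E₀ ρ₀ : ℝ) (hβ1 : 1 ≤ β) (hC₀ : 0 ≤ C₀) (hm : m ≤ E₀ - 1)
    (n : ℝ → ℝ) (hcont : Continuous n) (hmono : Monotone n) (hn0 : ∀ l, 0 ≤ n l)
    (hn2 : ∀ l, n l ≤ C₀*(1+|l|)^2) (hzero : ∀ l, l ≤ E₀ → n l = 0)
    (heq : ∫ l : ℝ, (β * Real.exp (β*(l-m)) * ((Real.exp (β*(l-m)) + 1)^2)⁻¹) * n l = ρ₀) :
    ρ₀ ≤ 5*C₀*(1+|E₀|)^2 * Real.exp (-β) := by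
  have hβ : (0:ℝ) < β := lt_of_lt_of_le one_pos hβ1
  have hInt := core_integrable β m C₀ hβ hC₀ n hcont hmono hn0 hn2
  have hsplit := intervalIntegral.integral_Iic_add_Ioi (b := E₀) hInt.integrableOn hInt.integrableOn
  rw [heq] at hsplit
  have hz : ∫ l in Set.Iic E₀, (β * Real.exp (β*(l-m)) * ((Real.exp (β*(l-m)) + 1)^2)⁻¹) * n l
      = 0 := by
    have hEq : Set.EqOn (fun l => (β * Real.exp (β*(l-m)) * ((Real.exp (β*(l-m)) + 1)^2)⁻¹) * n l)
        (fun _ => (0:ℝ)) (Set.Iic E₀) := fun x hx => by simp [hzero x hx]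
    rw [setIntegral_congr_fun measurableSet_Iic hEq, integral_zero]
  set K := C₀ * β * (1+|E₀|)^2 * Real.exp (-β) with hK
  have hKnn : 0 ≤ K := by positivity
  have h1 : ∫ l in Set.Ioi E₀, (β * Real.exp (β*(l-m)) * ((Real.exp (β*(l-m)) + 1)^2)⁻¹) * n l
      ≤ ∫ l in Set.Ioi E₀, K * (Real.exp (-β*(l-E₀)) * (1+(l-E₀))^2) := by
    refine setIntegral_mono_on hInt.integrableOn
      ((poly_integrableOn β E₀ hβ).const_mul K) measurableSet_Ioi fun l hl => ?_
    refine gn_pointwise β m C₀ E₀ β β hβ.le hC₀ n l (le_of_lt hl) (hn2 l) (hn0 l) ?_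
    have h2 : E₀ ≤ l := le_of_lt hl
    have h3 : β*(l-E₀+1) ≤ β*(l-m) := mul_le_mul_of_nonneg_left (by linarith) hβ.le
    have h4 : β*(l-E₀+1) = β + β*(l-E₀) := by ring
    linarith
  rw [integral_const_mul, poly_integral β E₀ hβ] at h1
  set V := 1/β + 2/β^2 + 2/β^3 with hV
  have hval : β * V ≤ 5 := by
    have heq2 : β * V = 1 + 2/β + 2/β^2 := by rw [hV]; field_simp
    rw [heq2]
    have e2 : (2:ℝ)/β ≤ 2 := by rw [div_le_iff₀ hβ]; nlinarith
    have e3 : (2:ℝ)/β^2 ≤ 2 := by rw [div_le_iff₀ (by positivity)]; nlinarith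
    linarith
  have h5 : K * V ≤ 5*C₀*(1+|E₀|)^2 * Real.exp (-β) := by
    calc K * V = (C₀ * (1+|E₀|)^2 * Real.exp (-β)) * (β * V) := by rw [hK]; ring
      _ ≤ (C₀ * (1+|E₀|)^2 * Real.exp (-β)) * 5 :=
          mul_le_mul_of_nonneg_left hval (by positivity)
      _ = 5*C₀*(1+|E₀|)^2 * Real.exp (-β) := by ring
  rw [hz, zero_add] at hsplit
  rw [hsplit] at h1
  linarith

/-- Metallic case: if the integrated density of states `n` is strictly increasing
near `E_M` with `n(E_M) = ρ₀`, and `μ(β)` solves the grand-canonical density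
equation for every `β > 0`, then the chemical potential converges to `E_M`. -/
theorem stmt_11 (E₀ ρ₀ : ℝ) (hρ₀ : 0 < ρ₀)
    (n : ℝ → ℝ) (hcont : Continuous n) (hmono : Monotone n)
    (hzero : ∀ l : ℝ, l ≤ E₀ → n l = 0)
    (C₀ : ℝ) (hC₀ : 0 < C₀)
    (hbound : ∀ l : ℝ, n l ≤ C₀ * (1 + |l|) ^ ((3 : ℝ) / 2))
    (E_M η : ℝ) (hη : 0 < η) (hEM : n E_M = ρ₀)
    (hstrict : StrictMonoOn n (Set.Ioo (E_M - η) (E_M + η)))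
    (μ : ℝ → ℝ)
    (hμ : ∀ β > (0 : ℝ),
      ∫ l : ℝ, β * Real.exp (β * (l - μ β)) * ((Real.exp (β * (l - μ β)) + 1) ^ 2)⁻¹ * n l
        = ρ₀) :
    Tendsto μ atTop (nhds E_M) := by
  have hn0 : ∀ l, 0 ≤ n l := by
    intro l
    rcases le_total l E₀ with h | h
    · rw [hzero l h]
    · rw [← hzero E₀ le_rfl]; exact hmono h
  have hn2 : ∀ l, n l ≤ C₀ * (1+|l|)^2 := by
    intro l
    refine (hbound l).trans (mul_le_mul_of_nonneg_left ?_ hC₀.le)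
    have h1 : (1:ℝ) ≤ 1 + |l| := by linarith [abs_nonneg l]
    have h2 : (1+|l|) ^ ((3:ℝ)/2) ≤ (1+|l|) ^ (((2:ℕ):ℝ)) :=
      Real.rpow_le_rpow_of_exponent_le h1 (by norm_num)
    rwa [Real.rpow_natCast] at h2
  rw [Metric.tendsto_nhds]
  intro ε hε
  set d := min ε η / 2 with hdd
  have hd : 0 < d := by positivity
  have hdε : d ≤ ε/2 := by
    have := min_le_left ε η; rw [hdd]; linarith
  have hdη : d ≤ η/2 := by
    have := min_le_right ε η; rw [hdd]; linarith
  set δ := d/4 with hδδ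
  have hδ : 0 < δ := by positivity
  have hna : n (E_M - d) < ρ₀ := by
    rw [← hEM]
    exact hstrict ⟨by linarith, by linarith⟩ ⟨by linarith, by linarith⟩ (by linarith)
  have hnb : ρ₀ < n (E_M + d) := by
    rw [← hEM]
    exact hstrict ⟨by linarith, by linarith⟩ ⟨by linarith, by linarith⟩ (by linarith)
  set R := max (|E₀|+1) (|E_M|+η) with hR
  -- eventually facts
  have hexp_dec : ∀ c : ℝ, 0 < c → Tendsto (fun β : ℝ => Real.exp (-(β*c))) atTop (nhds 0) := by
    intro c hc
    exact Real.tendsto_exp_atBot.comp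
      (tendsto_neg_atTop_atBot.comp (tendsto_id.atTop_mul_const hc))
  have hev2 : ∀ᶠ β : ℝ in atTop, ρ₀ * (Real.exp (-(β*δ)) + 1) < n (E_M + d) := by
    have h := ((hexp_dec δ hδ).add_const 1).const_mul ρ₀
    norm_num at h
    exact h.eventually_lt_const hnb
  have hev3 : ∀ᶠ β : ℝ in atTop,
      26*C₀*(1+R)^2 * Real.exp (-(β*(δ/2))) < ρ₀ - n (E_M - d) := by
    have h := (hexp_dec (δ/2) (by positivity)).const_mul (26*C₀*(1+R)^2)
    rw [mul_zero] at h
    exact h.eventually_lt_const (by linarith)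
  have hev4 : ∀ᶠ β : ℝ in atTop, 5*C₀*(1+|E₀|)^2 * Real.exp (-β) < ρ₀ := by
    have h := (Real.tendsto_exp_atBot.comp tendsto_neg_atTop_atBot).const_mul
      (5*C₀*(1+|E₀|)^2)
    rw [mul_zero] at h
    exact h.eventually_lt_const hρ₀
  filter_upwards [eventually_gt_atTop (0:ℝ), eventually_ge_atTop (1:ℝ), hev2, hev3, hev4]
    with β hβ0 hβ1 hb2 hb3 hb4
  set m := μ β with hm
  have heq : ∫ l : ℝ, (β * Real.exp (β*(l-m)) * ((Real.exp (β*(l-m)) + 1)^2)⁻¹) * n l = ρ₀ := by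
    exact hμ β hβ0
  -- upper bound on m
  have hup := core_upper β m C₀ ρ₀ hβ0 hC₀.le n hcont hmono hn0 hn2 heq (m - δ)
  rw [show β*((m-δ)-m) = -(β*δ) by ring] at hup
  have hpos : (0:ℝ) < Real.exp (-(β*δ)) + 1 := by positivity
  rw [mul_inv_le_iff₀ hpos] at hup
  have hlt1 : n (m-δ) < n (E_M + d) := lt_of_le_of_lt hup hb2
  have hmb : m - δ < E_M + d := by
    by_contra hcon
    exact absurd (hmono (not_lt.mp hcon)) (not_le.mpr hlt1)
  have hmη : m < E_M + η := by
    rw [hδδ] at hmb; linarith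
  -- a priori lower bound on m
  have hm_low : E₀ - 1 < m := by
    by_contra hcon
    have := core_apriori β m C₀ E₀ ρ₀ hβ1 hC₀.le (not_lt.mp hcon) n hcont hmono hn0 hn2
      hzero heq
    linarith
  have hmR : |m| ≤ R := by
    rw [abs_le]
    constructor
    · have h1 := le_max_left (|E₀|+1) (|E_M|+η)
      have h2 := neg_abs_le E₀
      rw [hR]; linarith
    · have h1 := le_max_right (|E₀|+1) (|E_M|+η)
      have h2 := le_abs_self E_M
      rw [hR]; linarith
  -- lower bound on m
  have hsplit := core_split β m C₀ ρ₀ hβ0 hC₀.le n hcont hmono hn0 hn2 heq (m + δ)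
  have htail := core_tail β m C₀ δ R ρ₀ hβ1 hC₀.le hδ hmR n hcont hmono hn0 hn2
  have hlt2 : n (E_M - d) < n (m+δ) := by linarith
  have hma : E_M - d < m + δ := by
    by_contra hcon
    exact absurd (hmono (not_lt.mp hcon)) (not_le.mpr hlt2)
  -- conclude
  rw [Real.dist_eq, abs_lt]
  constructor
  · rw [hδδ] at hma; linarith
  · rw [hδδ] at hmb; linarith
end

section
/- Let E : ℝ³ → ℝ be three times continuously differentiable and 2π-periodic in each coordinate, and let f : ℝ → ℝ be three times continuously differentiable. Write ∂ᵢE, ∂ᵢ²E and ∂₁∂₂E for the partial derivatives of E, and let Q = [−π,π]³. Then ∫_Q { f'''(E)·[ ((∂₁E)² + (∂₂E)²)/6 + (1/12)·( (∂₁E)²(1 − ∂₂²E) + (∂₂E)²(1 − ∂₁²E) + 2·∂₁E·∂₂E·∂₁∂₂E ) ] + f''(E)·(∂₁²E + ∂₂²E)/4 } dk = (1/6)·∫_Q f''(E)·( ∂₁²E·∂₂²E − (∂₁∂₂E)² ) dk. -/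
open Real MeasureTheory

/-- First partial derivative `∂ᵢ E` of a function on `ℝ³`. -/
noncomputable def pderiv3 (E : (Fin 3 → ℝ) → ℝ) (i : Fin 3) (k : Fin 3 → ℝ) : ℝ :=
  fderiv ℝ E k (Pi.single i 1)

/-- Second partial derivative `∂ᵢ∂ⱼ E` of a function on `ℝ³`. -/
noncomputable def pderiv3₂ (E : (Fin 3 → ℝ) → ℝ) (i j : Fin 3) (k : Fin 3 → ℝ) : ℝ :=
  fderiv ℝ (fun x => fderiv ℝ E x (Pi.single j 1)) k (Pi.single i 1)

lemma pder_eq (E : (Fin 3 → ℝ) → ℝ) (i j : Fin 3) :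
    pderiv3₂ E i j = pderiv3 (pderiv3 E j) i := rfl

lemma contDiff_pderiv3 {n : ℕ} {g : (Fin 3 → ℝ) → ℝ} (hg : ContDiff ℝ (n + 1 : ℕ) g)
    (j : Fin 3) : ContDiff ℝ (n : ℕ) (pderiv3 g j) := by
  have h : ContDiff ℝ (n : ℕ) (fderiv ℝ g) := hg.fderiv_right (by norm_cast)
  exact h.clm_apply contDiff_const

lemma pderiv3_periodic {g : (Fin 3 → ℝ) → ℝ} (hg : Differentiable ℝ g) {v : Fin 3 → ℝ}
    (hp : ∀ k, g (k + v) = g k) (j : Fin 3) (k : Fin 3 → ℝ) :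
    pderiv3 g j (k + v) = pderiv3 g j k := by
  have h1 : HasFDerivAt (fun x => g (x + v)) (fderiv ℝ g (k + v)) k := by
    have h := ((hg (k + v)).hasFDerivAt).comp k ((hasFDerivAt_id k).add_const v)
    exact h
  rw [show (fun x => g (x + v)) = g from funext hp] at h1
  show fderiv ℝ g (k + v) (Pi.single j 1) = fderiv ℝ g k (Pi.single j 1)
  rw [h1.fderiv]

lemma pderiv3_symm {g : (Fin 3 → ℝ) → ℝ} (hg : ContDiff ℝ 2 g) (i j : Fin 3) (k : Fin 3 → ℝ) :
    pderiv3 (pderiv3 g j) i k = pderiv3 (pderiv3 g i) j k := by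
  have hd : DifferentiableAt ℝ (fderiv ℝ g) k :=
    ((hg.fderiv_right (m := 1) (by norm_num)).differentiable (by norm_num)) k
  have key : ∀ v w : Fin 3 → ℝ,
      fderiv ℝ (fun x => fderiv ℝ g x w) k v = fderiv ℝ (fderiv ℝ g) k v w := by
    intro v w
    rw [fderiv_clm_apply hd (differentiableAt_const w)]
    simp
  have hsymm : fderiv ℝ (fderiv ℝ g) k (Pi.single i 1) (Pi.single j 1)
      = fderiv ℝ (fderiv ℝ g) k (Pi.single j 1) (Pi.single i 1) :=
    (hg.contDiffAt.isSymmSndFDerivAt (by norm_num)) _ _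
  show fderiv ℝ (fun x => fderiv ℝ g x (Pi.single j 1)) k (Pi.single i 1)
      = fderiv ℝ (fun x => fderiv ℝ g x (Pi.single i 1)) k (Pi.single j 1)
  rw [key, key, hsymm]

lemma insert_shift (i : Fin 3) (y : Fin 2 → ℝ) :
    Fin.insertNth i π y = Fin.insertNth i (-π) y + (2 * π) • (Pi.single i 1 : Fin 3 → ℝ) := by
  funext j
  rcases eq_or_ne j i with rfl | hj
  · simp [Fin.insertNth_apply_same]
    ring
  · obtain ⟨m, rfl⟩ := Fin.exists_succAbove_eq hj
    simp [Fin.insertNth_apply_succAbove, Pi.single_eq_of_ne (Fin.succAbove_ne i m)]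

lemma integral_pderiv_sum_eq_zero (G0 G1 : (Fin 3 → ℝ) → ℝ)
    (h0 : ContDiff ℝ 1 G0) (h1 : ContDiff ℝ 1 G1)
    (p0 : ∀ x, G0 (x + (2 * π) • (Pi.single 0 1 : Fin 3 → ℝ)) = G0 x)
    (p1 : ∀ x, G1 (x + (2 * π) • (Pi.single 1 1 : Fin 3 → ℝ)) = G1 x) :
    ∫ x in (Set.Icc (fun _ => -π) (fun _ => π) : Set (Fin 3 → ℝ)),
      (pderiv3 G0 0 x + pderiv3 G1 1 x) = 0 := by
  set a : Fin 3 → ℝ := fun _ => -π with ha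
  set b : Fin 3 → ℝ := fun _ => π with hb
  have hle : a ≤ b := by
    intro i; simp [ha, hb]; positivity
  set G : Fin 3 → (Fin 3 → ℝ) → ℝ := ![G0, G1, fun _ => 0] with hG
  have hGc : ∀ i, ContDiff ℝ 1 (G i) := by
    intro i
    fin_cases i
    · simpa [hG] using h0
    · simpa [hG] using h1
    · simpa [hG] using contDiff_const (c := (0:ℝ))
  have h00 : ContDiff ℝ ((0:ℕ) + 1 : ℕ) G0 := by exact_mod_cast h0
  have h10 : ContDiff ℝ ((0:ℕ) + 1 : ℕ) G1 := by exact_mod_cast h1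
  have hcont : Continuous fun x => pderiv3 G0 0 x + pderiv3 G1 1 x := by
    have c0 : Continuous (pderiv3 G0 0) := by
      have := contDiff_pderiv3 (n := 0) h00 0
      exact this.continuous
    have c1 : Continuous (pderiv3 G1 1) := by
      have := contDiff_pderiv3 (n := 0) h10 1
      exact this.continuous
    exact c0.add c1
  have key := MeasureTheory.integral_divergence_of_hasFDerivAt_off_countable (n := 2)
    a b hle (fun x i => G i x) (fun x => ContinuousLinearMap.pi fun i => fderiv ℝ (G i) x)
    ∅ Set.countable_empty
    (by
      apply continuousOn_pi.2
      intro i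
      exact (hGc i).continuous.continuousOn)
    (by
      intro x hx
      exact hasFDerivAt_pi.2 fun i => ((hGc i).differentiable (by norm_num) x).hasFDerivAt)
    (by
      have : (fun x => ∑ i : Fin 3, (ContinuousLinearMap.pi fun i => fderiv ℝ (G i) x)
          (Pi.single i 1) i) = fun x => pderiv3 G0 0 x + pderiv3 G1 1 x := by
        funext x
        rw [Fin.sum_univ_three]
        simp only [ContinuousLinearMap.pi_apply, hG]
        simp [pderiv3, Matrix.cons_val_zero, Matrix.cons_val_one]
      rw [this]
      exact hcont.integrableOn_Icc)
  have hfun : (fun x => ∑ i : Fin 3, (ContinuousLinearMap.pi fun i => fderiv ℝ (G i) x)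
      (Pi.single i 1) i) = fun x => pderiv3 G0 0 x + pderiv3 G1 1 x := by
    funext x
    rw [Fin.sum_univ_three]
    simp only [ContinuousLinearMap.pi_apply, hG]
    simp [pderiv3, Matrix.cons_val_zero, Matrix.cons_val_one]
  rw [← hfun] at *
  rw [key]
  rw [Fin.sum_univ_three]
  have e0 : (fun x : Fin 2 → ℝ => (fun x i => G i x) (Fin.insertNth 0 (b 0) x) 0)
      = fun x : Fin 2 → ℝ => (fun x i => G i x) (Fin.insertNth 0 (a 0) x) 0 := by
    funext x
    show G 0 (Fin.insertNth 0 (b 0) x) = G 0 (Fin.insertNth 0 (a 0) x)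
    rw [show (b 0 : ℝ) = π from rfl, show (a 0 : ℝ) = -π from rfl, insert_shift]
    simp only [hG, Matrix.cons_val_zero]
    exact p0 _
  have e1 : (fun x : Fin 2 → ℝ => (fun x i => G i x) (Fin.insertNth 1 (b 1) x) 1)
      = fun x : Fin 2 → ℝ => (fun x i => G i x) (Fin.insertNth 1 (a 1) x) 1 := by
    funext x
    show G 1 (Fin.insertNth 1 (b 1) x) = G 1 (Fin.insertNth 1 (a 1) x)
    rw [show (b 1 : ℝ) = π from rfl, show (a 1 : ℝ) = -π from rfl, insert_shift]
    simp only [hG, Matrix.cons_val_one, Matrix.head_cons]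
    exact p1 _
  have e2 : (fun x : Fin 2 → ℝ => (fun x i => G i x) (Fin.insertNth 2 (b 2) x) 2)
      = fun x : Fin 2 → ℝ => (fun x i => G i x) (Fin.insertNth 2 (a 2) x) 2 := by
    funext x
    show G 2 (Fin.insertNth 2 (b 2) x) = G 2 (Fin.insertNth 2 (a 2) x)
    simp [hG]
  rw [e0, e1, e2]
  ring

/-- The component of the vector field used in the integration by parts. -/
noncomputable def Gfun (f : ℝ → ℝ) (E : (Fin 3 → ℝ) → ℝ) (p q : Fin 3) :
    (Fin 3 → ℝ) → ℝ :=
  fun x => iteratedDeriv 2 f (E x) *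
    ((1/4) * pderiv3 E p x + (1/12) * (pderiv3 (pderiv3 E q) p x * pderiv3 E q x
      - pderiv3 (pderiv3 E q) q x * pderiv3 E p x))

lemma div_component (f : ℝ → ℝ) (hf : ContDiff ℝ 3 f) (E : (Fin 3 → ℝ) → ℝ)
    (hE : ContDiff ℝ 3 E) (p q : Fin 3) (k : Fin 3 → ℝ) :
    pderiv3 (Gfun f E p q) p k
    = iteratedDeriv 3 f (E k) * pderiv3 E p k *
        ((1/4) * pderiv3 E p k + (1/12) * (pderiv3 (pderiv3 E q) p k * pderiv3 E q k
          - pderiv3 (pderiv3 E q) q k * pderiv3 E p k))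
      + iteratedDeriv 2 f (E k) *
        ((1/4) * pderiv3 (pderiv3 E p) p k
          + (1/12) * ((pderiv3 (pderiv3 (pderiv3 E q) p) p k * pderiv3 E q k
              + pderiv3 (pderiv3 E q) p k * pderiv3 (pderiv3 E q) p k)
            - (pderiv3 (pderiv3 (pderiv3 E q) q) p k * pderiv3 E p k
              + pderiv3 (pderiv3 E q) q k * pderiv3 (pderiv3 E p) p k))) := by
  have hE3 : ContDiff ℝ ((2 : ℕ) + 1 : ℕ) E := by exact_mod_cast hE
  have hf3 : ContDiff ℝ ((2 : ℕ) + 1 : ℕ) f := by exact_mod_cast hf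
  have hEr : ∀ r : Fin 3, ContDiff ℝ ((1 : ℕ) + 1 : ℕ) (pderiv3 E r) := by
    intro r; exact_mod_cast contDiff_pderiv3 (n := 2) hE3 r
  have hErs : ∀ r s : Fin 3, ContDiff ℝ ((0 : ℕ) + 1 : ℕ) (pderiv3 (pderiv3 E s) r) := by
    intro r s; exact_mod_cast contDiff_pderiv3 (n := 1) (hEr s) r
  have hf2 : ContDiff ℝ (1 : ℕ) (iteratedDeriv 2 f) := by
    rw [iteratedDeriv_eq_iterate]
    exact ContDiff.iterate_deriv' 1 2 hf3
  have HE : HasFDerivAt E (fderiv ℝ E k) k :=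
    ((hE.differentiable (by norm_num)) k).hasFDerivAt
  have Hg : HasDerivAt (iteratedDeriv 2 f) (iteratedDeriv 3 f (E k)) (E k) := by
    have h := (((hf2.differentiable (by norm_num)) (E k))).hasDerivAt
    have h3 : iteratedDeriv 3 f = deriv (iteratedDeriv 2 f) := iteratedDeriv_succ
    rw [h3]
    exact h
  have Hu : HasFDerivAt (fun x => iteratedDeriv 2 f (E x))
      (iteratedDeriv 3 f (E k) • fderiv ℝ E k) k := Hg.comp_hasFDerivAt k HE
  have HEp : HasFDerivAt (pderiv3 E p) (fderiv ℝ (pderiv3 E p) k) k :=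
    (((hEr p).differentiable (by norm_num)) k).hasFDerivAt
  have HEq : HasFDerivAt (pderiv3 E q) (fderiv ℝ (pderiv3 E q) k) k :=
    (((hEr q).differentiable (by norm_num)) k).hasFDerivAt
  have HA : HasFDerivAt (pderiv3 (pderiv3 E q) p) (fderiv ℝ (pderiv3 (pderiv3 E q) p) k) k :=
    (((hErs p q).differentiable (by norm_num)) k).hasFDerivAt
  have HC : HasFDerivAt (pderiv3 (pderiv3 E q) q) (fderiv ℝ (pderiv3 (pderiv3 E q) q) k) k :=
    (((hErs q q).differentiable (by norm_num)) k).hasFDerivAt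
  have HV : HasFDerivAt (fun x => (1/4) * pderiv3 E p x
        + (1/12) * (pderiv3 (pderiv3 E q) p x * pderiv3 E q x
            - pderiv3 (pderiv3 E q) q x * pderiv3 E p x))
      ((1/4 : ℝ) • fderiv ℝ (pderiv3 E p) k
        + (1/12 : ℝ) • ((pderiv3 (pderiv3 E q) p k • fderiv ℝ (pderiv3 E q) k
              + pderiv3 E q k • fderiv ℝ (pderiv3 (pderiv3 E q) p) k)
          - (pderiv3 (pderiv3 E q) q k • fderiv ℝ (pderiv3 E p) k
              + pderiv3 E p k • fderiv ℝ (pderiv3 (pderiv3 E q) q) k))) k :=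
    (HEp.const_mul (1/4)).add (((HA.mul HEq).sub (HC.mul HEp)).const_mul (1/12))
  have Hprod := Hu.mul HV
  have hfd := Hprod.fderiv
  show fderiv ℝ (fun x => iteratedDeriv 2 f (E x) *
      ((1/4) * pderiv3 E p x + (1/12) * (pderiv3 (pderiv3 E q) p x * pderiv3 E q x
        - pderiv3 (pderiv3 E q) q x * pderiv3 E p x))) k (Pi.single p 1) = _
  erw [hfd]
  simp only [ContinuousLinearMap.add_apply, ContinuousLinearMap.coe_smul', Pi.smul_apply,
    ContinuousLinearMap.sub_apply, ContinuousLinearMap.coe_sub', ContinuousLinearMap.coe_add',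
    Pi.sub_apply, Pi.add_apply, smul_eq_mul, pderiv3]
  ring

lemma Gfun_contDiff {f : ℝ → ℝ} {E : (Fin 3 → ℝ) → ℝ} (hf : ContDiff ℝ 3 f)
    (hE : ContDiff ℝ 3 E) (p q : Fin 3) : ContDiff ℝ (1 : ℕ) (Gfun f E p q) := by
  have hE3 : ContDiff ℝ ((2 : ℕ) + 1 : ℕ) E := by exact_mod_cast hE
  have hf3 : ContDiff ℝ ((2 : ℕ) + 1 : ℕ) f := by exact_mod_cast hf
  have hf2 : ContDiff ℝ (1 : ℕ) (iteratedDeriv 2 f) := by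
    rw [iteratedDeriv_eq_iterate]
    exact ContDiff.iterate_deriv' 1 2 hf3
  have hE1 : ContDiff ℝ (1 : ℕ) E := hE.of_le (by norm_num)
  have hu : ContDiff ℝ (1 : ℕ) (fun x => iteratedDeriv 2 f (E x)) := hf2.comp hE1
  have hp2 : ∀ r, ContDiff ℝ (1 : ℕ) (pderiv3 E r) := by
    intro r
    exact (contDiff_pderiv3 (n := 2) hE3 r).of_le (by norm_cast)
  have hpq1 : ∀ r s, ContDiff ℝ (1 : ℕ) (pderiv3 (pderiv3 E s) r) := by
    intro r s
    have h2 : ContDiff ℝ ((1 : ℕ) + 1 : ℕ) (pderiv3 E s) := by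
      exact_mod_cast contDiff_pderiv3 (n := 2) hE3 s
    exact_mod_cast contDiff_pderiv3 (n := 1) h2 r
  exact hu.mul ((contDiff_const.mul (hp2 p)).add (contDiff_const.mul
    (((hpq1 p q).mul (hp2 q)).sub ((hpq1 q q).mul (hp2 p)))))

lemma Gfun_periodic {f : ℝ → ℝ} {E : (Fin 3 → ℝ) → ℝ} (hE : ContDiff ℝ 3 E)
    (hper : ∀ (k : Fin 3 → ℝ) (i : Fin 3), E (k + (2 * π) • (Pi.single i 1 : Fin 3 → ℝ)) = E k)
    (p q i : Fin 3) (x : Fin 3 → ℝ) :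
    Gfun f E p q (x + (2 * π) • (Pi.single i 1 : Fin 3 → ℝ)) = Gfun f E p q x := by
  have hE3 : ContDiff ℝ ((2 : ℕ) + 1 : ℕ) E := by exact_mod_cast hE
  have hdE : Differentiable ℝ E := hE.differentiable (by norm_num)
  have h1 : ∀ (r : Fin 3) (y : Fin 3 → ℝ),
      pderiv3 E r (y + (2 * π) • (Pi.single i 1 : Fin 3 → ℝ)) = pderiv3 E r y :=
    fun r y => pderiv3_periodic hdE (fun k => hper k i) r y
  have hdpE : ∀ s : Fin 3, Differentiable ℝ (pderiv3 E s) := by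
    intro s
    exact (contDiff_pderiv3 (n := 2) hE3 s).differentiable (by norm_cast)
  have h2 : ∀ (r s : Fin 3) (y : Fin 3 → ℝ),
      pderiv3 (pderiv3 E s) r (y + (2 * π) • (Pi.single i 1 : Fin 3 → ℝ))
        = pderiv3 (pderiv3 E s) r y :=
    fun r s y => pderiv3_periodic (hdpE s) (h1 s) r y
  simp only [Gfun]
  rw [hper x i, h1 p x, h1 q x, h2 p q x, h2 q q x]

/-- Repeated integration by parts over the period cell `Q = [−π,π]³`: for a `C³`
`2π`-periodic Bloch energy `E` and a `C³` function `f`, the combination multiplying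
`f'''∘E` can be traded for the Hessian-determinant combination multiplying `f''∘E`. -/
theorem stmt_13 (E : (Fin 3 → ℝ) → ℝ) (hE : ContDiff ℝ 3 E)
    (hper : ∀ (k : Fin 3 → ℝ) (i : Fin 3), E (k + (2 * π) • (Pi.single i 1 : Fin 3 → ℝ)) = E k)
    (f : ℝ → ℝ) (hf : ContDiff ℝ 3 f) :
    (∫ k in (Set.Icc (fun _ => -π) (fun _ => π) : Set (Fin 3 → ℝ)),
        (iteratedDeriv 3 f (E k) *
            (((pderiv3 E 0 k) ^ 2 + (pderiv3 E 1 k) ^ 2) / 6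
              + (1 / 12) *
                ((pderiv3 E 0 k) ^ 2 * (1 - pderiv3₂ E 1 1 k)
                  + (pderiv3 E 1 k) ^ 2 * (1 - pderiv3₂ E 0 0 k)
                  + 2 * pderiv3 E 0 k * pderiv3 E 1 k * pderiv3₂ E 0 1 k))
          + iteratedDeriv 2 f (E k) * (pderiv3₂ E 0 0 k + pderiv3₂ E 1 1 k) / 4))
      = (1 / 6) *
        ∫ k in (Set.Icc (fun _ => -π) (fun _ => π) : Set (Fin 3 → ℝ)),
          iteratedDeriv 2 f (E k) *
            (pderiv3₂ E 0 0 k * pderiv3₂ E 1 1 k - (pderiv3₂ E 0 1 k) ^ 2) := by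
  have hE3 : ContDiff ℝ ((2 : ℕ) + 1 : ℕ) E := by exact_mod_cast hE
  have hf3 : ContDiff ℝ ((2 : ℕ) + 1 : ℕ) f := by exact_mod_cast hf
  have hE2 : ContDiff ℝ 2 E := hE.of_le (by norm_num)
  have hpE2 : ∀ r : Fin 3, ContDiff ℝ 2 (pderiv3 E r) := by
    intro r; exact_mod_cast contDiff_pderiv3 (n := 2) hE3 r
  have h01 : pderiv3 (pderiv3 E 1) 0 = pderiv3 (pderiv3 E 0) 1 :=
    funext (pderiv3_symm hE2 0 1)
  -- the pointwise divergence identity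
  have key : ∀ k, pderiv3 (Gfun f E 0 1) 0 k + pderiv3 (Gfun f E 1 0) 1 k
      = (iteratedDeriv 3 f (E k) *
            (((pderiv3 E 0 k) ^ 2 + (pderiv3 E 1 k) ^ 2) / 6
              + (1 / 12) *
                ((pderiv3 E 0 k) ^ 2 * (1 - pderiv3₂ E 1 1 k)
                  + (pderiv3 E 1 k) ^ 2 * (1 - pderiv3₂ E 0 0 k)
                  + 2 * pderiv3 E 0 k * pderiv3 E 1 k * pderiv3₂ E 0 1 k))
          + iteratedDeriv 2 f (E k) * (pderiv3₂ E 0 0 k + pderiv3₂ E 1 1 k) / 4)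
        - (1 / 6) * (iteratedDeriv 2 f (E k) *
            (pderiv3₂ E 0 0 k * pderiv3₂ E 1 1 k - (pderiv3₂ E 0 1 k) ^ 2)) := by
    intro k
    have c2 : pderiv3 (pderiv3 (pderiv3 E 1) 1) 0 k
        = pderiv3 (pderiv3 (pderiv3 E 1) 0) 1 k := pderiv3_symm (hpE2 1) 0 1 k
    simp only [pder_eq]
    rw [div_component f hf E hE 0 1 k, div_component f hf E hE 1 0 k, c2, h01]
    have c1 : pderiv3 (pderiv3 (pderiv3 E 0) 1) 0 k
        = pderiv3 (pderiv3 (pderiv3 E 0) 0) 1 k := pderiv3_symm (hpE2 0) 0 1 k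
    rw [c1]
    ring
  -- continuity of the two integrands
  have cE : Continuous E := hE.continuous
  have c3f : Continuous (iteratedDeriv 3 f) := by
    rw [iteratedDeriv_eq_iterate]
    exact (ContDiff.iterate_deriv' 0 3 hf3).continuous
  have c2f : Continuous (iteratedDeriv 2 f) := by
    rw [iteratedDeriv_eq_iterate]
    exact (ContDiff.iterate_deriv' 1 2 hf3).continuous
  have cE0 : Continuous (pderiv3 E 0) := (hpE2 0).continuous
  have cE1 : Continuous (pderiv3 E 1) := (hpE2 1).continuous
  have cEij : ∀ r s : Fin 3, Continuous (pderiv3₂ E r s) := by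
    intro r s
    rw [pder_eq]
    have h2 : ContDiff ℝ ((1 : ℕ) + 1 : ℕ) (pderiv3 E s) := by
      exact_mod_cast contDiff_pderiv3 (n := 2) hE3 s
    exact (contDiff_pderiv3 (n := 1) h2 r).continuous
  have c00 := cEij 0 0
  have c11 := cEij 1 1
  have c01 := cEij 0 1
  have hΦ : Continuous fun k =>
      iteratedDeriv 3 f (E k) *
          (((pderiv3 E 0 k) ^ 2 + (pderiv3 E 1 k) ^ 2) / 6
            + (1 / 12) *
              ((pderiv3 E 0 k) ^ 2 * (1 - pderiv3₂ E 1 1 k)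
                + (pderiv3 E 1 k) ^ 2 * (1 - pderiv3₂ E 0 0 k)
                + 2 * pderiv3 E 0 k * pderiv3 E 1 k * pderiv3₂ E 0 1 k))
        + iteratedDeriv 2 f (E k) * (pderiv3₂ E 0 0 k + pderiv3₂ E 1 1 k) / 4 := by
    fun_prop
  have hΨ : Continuous fun k => (1/6 : ℝ) * (iteratedDeriv 2 f (E k) *
      (pderiv3₂ E 0 0 k * pderiv3₂ E 1 1 k - (pderiv3₂ E 0 1 k) ^ 2)) := by
    fun_prop
  -- the divergence integrates to zero
  have hzero := integral_pderiv_sum_eq_zero (Gfun f E 0 1) (Gfun f E 1 0)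
    (by exact_mod_cast Gfun_contDiff hf hE 0 1)
    (by exact_mod_cast Gfun_contDiff hf hE 1 0)
    (Gfun_periodic hE hper 0 1 0)
    (Gfun_periodic hE hper 1 0 1)
  rw [funext key] at hzero
  rw [MeasureTheory.integral_sub (hΦ.integrableOn_Icc) (hΨ.integrableOn_Icc),
    MeasureTheory.integral_const_mul] at hzero
  linarith
end

section
/- Let m₁, m₂, m₃ > 0, let Q = [−π,π]³, and let E : Q → ℝ be continuous with E(0) = E₀, such that for every r > 0 the infimum of E over {k ∈ Q : |k| ≥ r} is strictly greater than E₀, and such that E(k) = E₀ + (1/2)(k₁²/m₁ + k₂²/m₂ + k₃²/m₃) + O(|k|⁴) as k → 0. Suppose ρ₁ > 0 and Δ : (0,ρ₁) → (0,∞) satisfy (2π)⁻³·vol{k ∈ Q : E(k) ≤ E₀ + Δ(ρ₀)} = ρ₀ for all ρ₀ ∈ (0,ρ₁), and Δ(ρ₀) → 0 as ρ₀ → 0⁺. Then Δ(ρ₀) = s·ρ₀^{2/3} + O(ρ₀^{4/3}) as ρ₀ → 0⁺, where s := (6π²)^{2/3}/(2·(m₁m₂m₃)^{1/3}). -/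
open Real MeasureTheory Filter Asymptotics

lemma vol_sum_sq_le (R : ℝ) (hR : 0 ≤ R) :
    volume {x : Fin 3 → ℝ | ∑ i, x i ^ 2 ≤ R} = ENNReal.ofReal ((4/3) * π * Real.sqrt R ^ 3) := by
  have hmp := EuclideanSpace.volume_preserving_symm_measurableEquiv_toLp (Fin 3)
  have hms : MeasurableSet {x : Fin 3 → ℝ | ∑ i, x i ^ 2 ≤ R} := by
    apply measurableSet_le _ measurable_const
    exact Finset.measurable_sum _ fun i _ => ((measurable_pi_apply i).pow_const 2)
  have key : volume {x : Fin 3 → ℝ | ∑ i, x i ^ 2 ≤ R}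
      = volume (((MeasurableEquiv.toLp 2 (Fin 3 → ℝ)).symm) ⁻¹' {x : Fin 3 → ℝ | ∑ i, x i ^ 2 ≤ R}) :=
    (hmp.measure_preimage hms.nullMeasurableSet).symm
  have hset : ((MeasurableEquiv.toLp 2 (Fin 3 → ℝ)).symm) ⁻¹' {x : Fin 3 → ℝ | ∑ i, x i ^ 2 ≤ R}
      = Metric.closedBall (0 : EuclideanSpace ℝ (Fin 3)) (Real.sqrt R) := by
    ext y
    simp only [Set.mem_preimage, Set.mem_setOf_eq, Metric.mem_closedBall, dist_zero_right,
      EuclideanSpace.norm_eq]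
    have h2 : ∀ i : Fin 3, ((MeasurableEquiv.toLp 2 (Fin 3 → ℝ)).symm) y i = y i := fun i => rfl
    simp_rw [h2, Real.norm_eq_abs, sq_abs]
    rw [← Real.sqrt_le_sqrt_iff hR]
  rw [key, hset, EuclideanSpace.volume_closedBall]
  have hcard : Fintype.card (Fin 3) = 3 := by simp
  rw [hcard]
  have hG : Real.Gamma ((3:ℕ) / 2 + 1) = (3/4) * Real.sqrt π := by
    have h1 : ((3:ℕ):ℝ)/2 + 1 = (3/2 : ℝ) + 1 := by norm_num
    rw [h1, Real.Gamma_add_one (by norm_num)]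
    have h2 : (3/2 : ℝ) = 1/2 + 1 := by norm_num
    rw [h2, Real.Gamma_add_one (by norm_num), Real.Gamma_one_half_eq]
    ring
  rw [hG]
  rw [← ENNReal.ofReal_pow (Real.sqrt_nonneg R), ← ENNReal.ofReal_mul (by positivity)]
  congr 1
  have hπ : Real.sqrt π ^ 3 = π * Real.sqrt π := by
    rw [pow_succ, Real.sq_sqrt Real.pi_pos.le]
  rw [hπ]
  have : Real.sqrt π ≠ 0 := by positivity
  field_simp

lemma vol_ellipsoid (b : Fin 3 → ℝ) (hb : ∀ i, 0 < b i) (R : ℝ) (hR : 0 ≤ R) :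
    volume {k : Fin 3 → ℝ | ∑ i, b i * k i ^ 2 ≤ R}
      = ENNReal.ofReal ((∏ i, Real.sqrt (b i))⁻¹ * ((4/3) * π * Real.sqrt R ^ 3)) := by
  set f : (Fin 3 → ℝ) →ₗ[ℝ] (Fin 3 → ℝ) :=
    Matrix.toLin' (Matrix.diagonal fun i => Real.sqrt (b i)) with hf
  have hdet : LinearMap.det f = ∏ i, Real.sqrt (b i) := by
    rw [hf, LinearMap.det_toLin', Matrix.det_diagonal]
  have hdetpos : 0 < ∏ i, Real.sqrt (b i) :=
    Finset.prod_pos fun i _ => Real.sqrt_pos.2 (hb i)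
  have hdne : LinearMap.det f ≠ 0 := by rw [hdet]; exact hdetpos.ne'
  have hpre : {k : Fin 3 → ℝ | ∑ i, b i * k i ^ 2 ≤ R}
      = f ⁻¹' {x : Fin 3 → ℝ | ∑ i, x i ^ 2 ≤ R} := by
    ext k
    simp only [Set.mem_preimage, Set.mem_setOf_eq]
    have hfk : ∀ i, f k i = Real.sqrt (b i) * k i := by
      intro i
      rw [hf]
      simp [Matrix.toLin'_apply, Matrix.mulVec_diagonal]
    have : ∀ i, f k i ^ 2 = b i * k i ^ 2 := by
      intro i
      rw [hfk i, mul_pow, Real.sq_sqrt (hb i).le]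
    rw [Finset.sum_congr rfl fun i _ => this i]
  rw [hpre, MeasureTheory.Measure.addHaar_preimage_linearMap volume hdne,
    vol_sum_sq_le R hR, hdet, ← ENNReal.ofReal_mul (by positivity)]
  congr 2
  rw [abs_of_pos (by positivity)]

lemma rpow_mul_natCast (x : ℝ) (hx : 0 ≤ x) (a : ℝ) (n : ℕ) :
    (x ^ a) ^ (n : ℕ) = x ^ (a * n) := by
  rw [← Real.rpow_natCast (x ^ a) n, ← Real.rpow_mul hx]

lemma norm_sq_le_sum (k : Fin 3 → ℝ) : ‖k‖ ^ 2 ≤ (k 0) ^ 2 + (k 1) ^ 2 + (k 2) ^ 2 := by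
  have hsnn : (0:ℝ) ≤ (k 0) ^ 2 + (k 1) ^ 2 + (k 2) ^ 2 := by positivity
  have h : ‖k‖ ≤ Real.sqrt ((k 0) ^ 2 + (k 1) ^ 2 + (k 2) ^ 2) := by
    apply (pi_norm_le_iff_of_nonneg (Real.sqrt_nonneg _)).2
    intro i
    rw [Real.norm_eq_abs, ← Real.sqrt_sq_eq_abs]
    apply Real.sqrt_le_sqrt
    fin_cases i <;> simp <;> nlinarith [sq_nonneg (k 0), sq_nonneg (k 1), sq_nonneg (k 2)]
  calc ‖k‖ ^ 2 ≤ Real.sqrt ((k 0) ^ 2 + (k 1) ^ 2 + (k 2) ^ 2) ^ 2 :=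
        pow_le_pow_left₀ (norm_nonneg k) h 2
    _ = _ := Real.sq_sqrt hsnn

lemma qlow_bound (m₁ m₂ m₃ : ℝ) (hm₁ : 0 < m₁) (hm₂ : 0 < m₂) (hm₃ : 0 < m₃)
    (mx : ℝ) (hm₁x : m₁ ≤ mx) (hm₂x : m₂ ≤ mx) (hm₃x : m₃ ≤ mx)
    (k : Fin 3 → ℝ) :
    ‖k‖ ^ 2 ≤ 2 * mx * ((1 / 2) * ((k 0) ^ 2 / m₁ + (k 1) ^ 2 / m₂ + (k 2) ^ 2 / m₃)) := by
  have h0 : k 0 ^ 2 ≤ mx * (k 0 ^ 2 / m₁) := by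
    rw [← mul_div_assoc, le_div_iff₀ hm₁]; nlinarith [sq_nonneg (k 0)]
  have h1 : k 1 ^ 2 ≤ mx * (k 1 ^ 2 / m₂) := by
    rw [← mul_div_assoc, le_div_iff₀ hm₂]; nlinarith [sq_nonneg (k 1)]
  have h2 : k 2 ^ 2 ≤ mx * (k 2 ^ 2 / m₃) := by
    rw [← mul_div_assoc, le_div_iff₀ hm₃]; nlinarith [sq_nonneg (k 2)]
  have hq : 2 * mx * ((1 / 2) * ((k 0) ^ 2 / m₁ + (k 1) ^ 2 / m₂ + (k 2) ^ 2 / m₃))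
      = mx * (k 0 ^ 2 / m₁) + mx * (k 1 ^ 2 / m₂) + mx * (k 2 ^ 2 / m₃) := by ring
  rw [hq]
  linarith [norm_sq_le_sum k]

lemma vol_q_sublevel (m₁ m₂ m₃ : ℝ) (hm₁ : 0 < m₁) (hm₂ : 0 < m₂) (hm₃ : 0 < m₃)
    (t : ℝ) (ht : 0 ≤ t) :
    volume {k : Fin 3 → ℝ | (1 / 2) * ((k 0) ^ 2 / m₁ + (k 1) ^ 2 / m₂ + (k 2) ^ 2 / m₃) ≤ t}
      = ENNReal.ofReal (((4 / 3) * π * (Real.sqrt (2 * m₁) * Real.sqrt (2 * m₂) *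
          Real.sqrt (2 * m₃))) * Real.sqrt t ^ 3) := by
  set b : Fin 3 → ℝ := ![(2 * m₁)⁻¹, (2 * m₂)⁻¹, (2 * m₃)⁻¹] with hbdef
  have hb : ∀ i, 0 < b i := by
    intro i; fin_cases i <;> simp [hbdef] <;> positivity
  have hseteq : {k : Fin 3 → ℝ | (1 / 2) * ((k 0) ^ 2 / m₁ + (k 1) ^ 2 / m₂ + (k 2) ^ 2 / m₃) ≤ t}
      = {k : Fin 3 → ℝ | ∑ i, b i * k i ^ 2 ≤ t} := by
    ext k
    simp only [Set.mem_setOf_eq, Fin.sum_univ_three, hbdef]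
    have : ((1:ℝ) / 2) * ((k 0) ^ 2 / m₁ + (k 1) ^ 2 / m₂ + (k 2) ^ 2 / m₃)
        = (2 * m₁)⁻¹ * k 0 ^ 2 + (2 * m₂)⁻¹ * k 1 ^ 2 + (2 * m₃)⁻¹ * k 2 ^ 2 := by
      field_simp
    rw [this]
    simp [Matrix.cons_val_zero, Matrix.cons_val_one]
  rw [hseteq, vol_ellipsoid b hb t ht]
  congr 1
  have hP : (∏ i, Real.sqrt (b i))
      = (Real.sqrt (2 * m₁) * Real.sqrt (2 * m₂) * Real.sqrt (2 * m₃))⁻¹ := by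
    rw [Fin.prod_univ_three]
    simp only [hbdef, Matrix.cons_val_zero, Matrix.cons_val_one, Matrix.head_cons,
      Matrix.cons_val_two, Matrix.tail_cons, Real.sqrt_inv]
    rw [mul_inv, mul_inv]
  rw [hP, inv_inv]
  ring

lemma key_identity (m₁ m₂ m₃ : ℝ) (hm₁ : 0 < m₁) (hm₂ : 0 < m₂) (hm₃ : 0 < m₃) (s : ℝ)
    (hs : s = (6 * π ^ 2) ^ ((2 : ℝ) / 3) / (2 * (m₁ * m₂ * m₃) ^ ((1 : ℝ) / 3)))
    (t : ℝ) (ht : 0 < t) :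
    ((4 / 3) * π * (Real.sqrt (2 * m₁) * Real.sqrt (2 * m₂) * Real.sqrt (2 * m₃)))
      * Real.sqrt (s * t ^ ((2:ℝ)/3)) ^ 3 = 8 * π ^ 3 * t := by
  set c : ℝ := (4 / 3) * π * (Real.sqrt (2 * m₁) * Real.sqrt (2 * m₂) * Real.sqrt (2 * m₃))
    with hcdef
  have hspos : 0 < s := by rw [hs]; positivity
  set u : ℝ := s * t ^ ((2:ℝ)/3) with hudef
  have hu0 : 0 ≤ u := by positivity
  have hL0 : 0 ≤ c * Real.sqrt u ^ 3 := by positivity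
  have hR0 : (0:ℝ) ≤ 8 * π ^ 3 * t := by positivity
  have hsq : (c * Real.sqrt u ^ 3) ^ 2 = (8 * π ^ 3 * t) ^ 2 := by
    have hsu : (Real.sqrt u ^ 3) ^ 2 = u ^ 3 := by
      rw [← pow_mul, show 3 * 2 = 2 * 3 by ring, pow_mul, Real.sq_sqrt hu0]
    have hc2 : c ^ 2 = (16 / 9) * π ^ 2 * (2 * m₁) * (2 * m₂) * (2 * m₃) := by
      rw [hcdef]
      rw [mul_pow, mul_pow, mul_pow, mul_pow, Real.sq_sqrt (by positivity : (0:ℝ) ≤ 2 * m₁),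
        Real.sq_sqrt (by positivity : (0:ℝ) ≤ 2 * m₂),
        Real.sq_sqrt (by positivity : (0:ℝ) ≤ 2 * m₃)]
      ring
    have ht3 : (t ^ ((2:ℝ)/3)) ^ (3:ℕ) = t ^ (2:ℕ) := by
      rw [rpow_mul_natCast t ht.le, show (2:ℝ)/3 * (3:ℕ) = ((2:ℕ):ℝ) by norm_num,
        Real.rpow_natCast]
    have hA3 : ((6 * π ^ 2) ^ ((2:ℝ)/3)) ^ (3:ℕ) = (6 * π ^ 2) ^ (2:ℕ) := by
      rw [rpow_mul_natCast _ (by positivity), show (2:ℝ)/3 * (3:ℕ) = ((2:ℕ):ℝ) by norm_num,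
        Real.rpow_natCast]
    have hB3 : ((m₁ * m₂ * m₃) ^ ((1:ℝ)/3)) ^ (3:ℕ) = m₁ * m₂ * m₃ := by
      rw [rpow_mul_natCast _ (by positivity), show (1:ℝ)/3 * (3:ℕ) = ((1:ℕ):ℝ) by norm_num,
        Real.rpow_natCast, pow_one]
    have hBpos : 0 < (m₁ * m₂ * m₃) ^ ((1:ℝ)/3) := by positivity
    have hu3 : u ^ 3 = s ^ 3 * t ^ 2 := by
      rw [hudef, mul_pow, ht3]
    have hs3 : s ^ 3 * (8 * (m₁ * m₂ * m₃)) = (6 * π ^ 2) ^ 2 := by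
      rw [hs, div_pow, mul_pow, hA3, hB3]
      field_simp
      ring
    calc (c * Real.sqrt u ^ 3) ^ 2 = c ^ 2 * (Real.sqrt u ^ 3) ^ 2 := by ring
      _ = (16 / 9) * π ^ 2 * (2 * m₁) * (2 * m₂) * (2 * m₃) * (s ^ 3 * t ^ 2) := by
          rw [hsu, hc2, hu3]
      _ = (16 / 9 * π ^ 2 * t ^ 2) * (s ^ 3 * (8 * (m₁ * m₂ * m₃))) := by ring
      _ = (16 / 9 * π ^ 2 * t ^ 2) * (6 * π ^ 2) ^ 2 := by rw [hs3]
      _ = (8 * π ^ 3 * t) ^ 2 := by ring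
  have := congrArg Real.sqrt hsq
  rwa [Real.sqrt_sq hL0, Real.sqrt_sq hR0] at this

lemma sandwich (E : (Fin 3 → ℝ) → ℝ) (E₀ : ℝ) (Q : Set (Fin 3 → ℝ))
    (hQ : Q = Set.Icc (fun _ => -π) (fun _ => π))
    (q : (Fin 3 → ℝ) → ℝ) (mx : ℝ) (hmxpos : 0 < mx)
    (hqlow : ∀ k : Fin 3 → ℝ, ‖k‖ ^ 2 ≤ 2 * mx * q k)
    (C : ℝ) (hC0 : 0 ≤ C) (r₁ : ℝ)
    (hCb : ∀ k : Fin 3 → ℝ, ‖k‖ < r₁ → |E k - (E₀ + q k)| ≤ C * ‖k‖ ^ 4)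
    (r₀ : ℝ) (hr₀pos : 0 < r₀) (hr₀r₁ : r₀ < r₁) (hr₀π : r₀ ≤ π)
    (hr₀C : 2 * mx * C * r₀ ^ 2 ≤ 1 / 2)
    (ε : ℝ) (hε : ∀ k ∈ Q, r₀ ≤ ‖k‖ → E₀ + ε ≤ E k)
    (K : ℝ) (hKdef : K = 16 * C * mx ^ 2 + 1)
    (δ : ℝ) (hδ1 : δ ≤ ε) (hδ2 : δ ≤ 1 / (2 * K)) (hδ3 : δ ≤ r₀ ^ 2 / (2 * mx))
    (x : ℝ) (hx0 : 0 < x) (hxδ : x < δ) :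
    {k : Fin 3 → ℝ | q k ≤ (1 - K * x) * x} ⊆ {k ∈ Q | E k ≤ E₀ + x} ∧
    {k ∈ Q | E k ≤ E₀ + x} ⊆ {k : Fin 3 → ℝ | q k ≤ (1 + K * x) * x} := by
  have hKpos : 0 < K := by rw [hKdef]; positivity
  have hxε : x < ε := lt_of_lt_of_le hxδ hδ1
  have hxK : K * x < 1 / 2 := by
    have h := lt_of_lt_of_le hxδ hδ2
    have h2K : (0:ℝ) < 2 * K := by linarith
    have h3 := (lt_div_iff₀ h2K).1 h
    linarith [mul_lt_mul_of_pos_left h3 hKpos, h3]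
  have hxr : 2 * mx * x < r₀ ^ 2 := by
    have h := lt_of_lt_of_le hxδ hδ3
    have h2mx : (0:ℝ) < 2 * mx := by linarith
    have h3 := (lt_div_iff₀ h2mx).1 h
    linarith [h3]
  constructor
  · -- lower inclusion
    intro k hk
    simp only [Set.mem_setOf_eq] at hk
    have hqx : q k ≤ x :=
      le_trans hk (by linarith [mul_nonneg hKpos.le (sq_nonneg x)])
    have hkn2 : ‖k‖ ^ 2 ≤ 2 * mx * x :=
      le_trans (hqlow k) (mul_le_mul_of_nonneg_left hqx (by positivity))
    have hknr : ‖k‖ < r₀ := by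
      have h : ‖k‖ ^ 2 < r₀ ^ 2 := lt_of_le_of_lt hkn2 hxr
      exact lt_of_pow_lt_pow_left₀ 2 hr₀pos.le h
    have hkQ : k ∈ Q := by
      rw [hQ, Set.mem_Icc]
      constructor <;> intro i <;>
        have hi := abs_le.1 (le_trans (le_of_eq (Real.norm_eq_abs (k i)).symm)
          (le_trans (norm_le_pi_norm k i) (le_trans hknr.le hr₀π)))
      · exact hi.1
      · exact hi.2
    have hCk := hCb k (lt_trans hknr hr₀r₁)
    have hk4 : ‖k‖ ^ 4 ≤ 4 * mx ^ 2 * x ^ 2 := by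
      calc ‖k‖ ^ 4 = (‖k‖ ^ 2) ^ 2 := by ring
        _ ≤ (2 * mx * x) ^ 2 := pow_le_pow_left₀ (sq_nonneg ‖k‖) hkn2 2
        _ = 4 * mx ^ 2 * x ^ 2 := by ring
    have hEk : E k ≤ E₀ + q k + C * ‖k‖ ^ 4 := by
      have := (abs_le.1 hCk).2
      linarith
    refine ⟨hkQ, ?_⟩
    have hCk4 : C * ‖k‖ ^ 4 ≤ 4 * C * mx ^ 2 * x ^ 2 :=
      calc C * ‖k‖ ^ 4 ≤ C * (4 * mx ^ 2 * x ^ 2) := mul_le_mul_of_nonneg_left hk4 hC0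
        _ = 4 * C * mx ^ 2 * x ^ 2 := by ring
    have hKb : 4 * C * mx ^ 2 * x ^ 2 ≤ K * x ^ 2 := by
      rw [hKdef]
      linarith [mul_nonneg (mul_nonneg hC0 (sq_nonneg mx)) (sq_nonneg x), sq_nonneg x]
    have hexp : (1 - K * x) * x = x - K * x ^ 2 := by ring
    rw [hexp] at hk
    linarith
  · -- upper inclusion
    intro k hk
    obtain ⟨hkQ, hkE⟩ := hk
    have hknr : ‖k‖ < r₀ := by
      by_contra h
      push_neg at h
      have := hε k hkQ h
      linarith
    have hCk := hCb k (lt_trans hknr hr₀r₁)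
    have hqk : q k ≤ x + C * ‖k‖ ^ 4 := by
      have := (abs_le.1 hCk).1
      linarith
    have hkr2 : ‖k‖ ^ 2 ≤ r₀ ^ 2 := pow_le_pow_left₀ (norm_nonneg k) hknr.le 2
    have hk42 : ‖k‖ ^ 4 ≤ r₀ ^ 2 * ‖k‖ ^ 2 := by
      calc ‖k‖ ^ 4 = ‖k‖ ^ 2 * ‖k‖ ^ 2 := by ring
        _ ≤ r₀ ^ 2 * ‖k‖ ^ 2 := mul_le_mul_of_nonneg_right hkr2 (sq_nonneg ‖k‖)
    have hn2 : ‖k‖ ^ 2 ≤ 4 * mx * x := by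
      have h1 : ‖k‖ ^ 2 ≤ 2 * mx * x + 2 * mx * C * ‖k‖ ^ 4 := by
        have h := le_trans (hqlow k) (mul_le_mul_of_nonneg_left hqk (by positivity))
        linarith [h]
      have h2 : 2 * mx * C * ‖k‖ ^ 4 ≤ (2 * mx * C * r₀ ^ 2) * ‖k‖ ^ 2 := by
        have h := mul_le_mul_of_nonneg_left hk42 (by positivity : (0:ℝ) ≤ 2 * mx * C)
        linarith [h]
      have h3 : (2 * mx * C * r₀ ^ 2) * ‖k‖ ^ 2 ≤ (1/2) * ‖k‖ ^ 2 :=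
        mul_le_mul_of_nonneg_right hr₀C (sq_nonneg ‖k‖)
      linarith
    have hk44 : ‖k‖ ^ 4 ≤ 16 * mx ^ 2 * x ^ 2 := by
      calc ‖k‖ ^ 4 = (‖k‖ ^ 2) ^ 2 := by ring
        _ ≤ (4 * mx * x) ^ 2 := pow_le_pow_left₀ (sq_nonneg ‖k‖) hn2 2
        _ = 16 * mx ^ 2 * x ^ 2 := by ring
    simp only [Set.mem_setOf_eq]
    have hCk4 : C * ‖k‖ ^ 4 ≤ 16 * C * mx ^ 2 * x ^ 2 :=
      calc C * ‖k‖ ^ 4 ≤ C * (16 * mx ^ 2 * x ^ 2) := mul_le_mul_of_nonneg_left hk44 hC0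
        _ = 16 * C * mx ^ 2 * x ^ 2 := by ring
    have hKb : 16 * C * mx ^ 2 * x ^ 2 ≤ K * x ^ 2 := by
      rw [hKdef]; linarith [sq_nonneg x]
    have hexp : (1 + K * x) * x = x + K * x ^ 2 := by ring
    rw [hexp]
    linarith

lemma pointwise (q : (Fin 3 → ℝ) → ℝ) (S : Set (Fin 3 → ℝ))
    (c : ℝ) (hcpos : 0 < c)
    (hvol : ∀ t : ℝ, 0 ≤ t →
      volume {k : Fin 3 → ℝ | q k ≤ t} = ENNReal.ofReal (c * Real.sqrt t ^ 3))
    (s : ℝ) (hspos : 0 < s)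
    (hkey : ∀ t : ℝ, 0 < t → c * Real.sqrt (s * t ^ ((2:ℝ)/3)) ^ 3 = 8 * π ^ 3 * t)
    (K : ℝ) (hKpos : 0 < K) (δ : ℝ) (hδ2 : δ ≤ 1 / (2 * K))
    (x t : ℝ) (hx0 : 0 < x) (hxδ : x < δ)
    (hsub1 : {k : Fin 3 → ℝ | q k ≤ (1 - K * x) * x} ⊆ S)
    (hsub2 : S ⊆ {k : Fin 3 → ℝ | q k ≤ (1 + K * x) * x})
    (ht : 0 < t) (hvolS : ((2 * π) ^ 3)⁻¹ * (volume S).toReal = t) :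
    |x - s * t ^ ((2:ℝ)/3)| ≤ (4 * K * s ^ 2) * t ^ ((4:ℝ)/3) := by
  have hxK : K * x < 1 / 2 := by
    have h := lt_of_lt_of_le hxδ hδ2
    have h2K : (0:ℝ) < 2 * K := by linarith
    have h3 := (lt_div_iff₀ h2K).1 h
    linarith [mul_lt_mul_of_pos_left h3 hKpos, h3]
  have ht₁0 : (0:ℝ) ≤ (1 - K * x) * x := by
    have h1 : (0:ℝ) ≤ 1 - K * x := by linarith
    exact mul_nonneg h1 hx0.le
  have ht₂0 : (0:ℝ) ≤ (1 + K * x) * x := by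
    have h1 : (0:ℝ) ≤ 1 + K * x := by nlinarith
    exact mul_nonneg h1 hx0.le
  set u : ℝ := s * t ^ ((2:ℝ)/3) with hudef
  have hu0 : 0 ≤ u := by positivity
  have hv1 : ENNReal.ofReal (c * Real.sqrt ((1 - K * x) * x) ^ 3) ≤ volume S := by
    rw [← hvol _ ht₁0]
    exact measure_mono hsub1
  have hv2 : volume S ≤ ENNReal.ofReal (c * Real.sqrt ((1 + K * x) * x) ^ 3) := by
    rw [← hvol _ ht₂0]
    exact measure_mono hsub2
  have hfin : volume S ≠ ⊤ := (lt_of_le_of_lt hv2 ENNReal.ofReal_lt_top).ne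
  have htr1 : c * Real.sqrt ((1 - K * x) * x) ^ 3 ≤ (volume S).toReal := by
    have := ENNReal.toReal_mono hfin hv1
    rwa [ENNReal.toReal_ofReal (by positivity)] at this
  have htr2 : (volume S).toReal ≤ c * Real.sqrt ((1 + K * x) * x) ^ 3 := by
    have := ENNReal.toReal_mono ENNReal.ofReal_ne_top hv2
    rwa [ENNReal.toReal_ofReal (by positivity)] at this
  have hSt : (volume S).toReal = 8 * π ^ 3 * t := by
    have hπ3 : ((2 * π) ^ 3 : ℝ) ≠ 0 := by positivity
    field_simp at hvolS
    linarith
  rw [hSt] at htr1 htr2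
  rw [← hkey t ht] at htr1 htr2
  have hmono : ∀ a b : ℝ, 0 ≤ a → 0 ≤ b →
      c * Real.sqrt a ^ 3 ≤ c * Real.sqrt b ^ 3 → a ≤ b := by
    intro a b ha hb h
    have h1 : Real.sqrt a ^ 3 ≤ Real.sqrt b ^ 3 := le_of_mul_le_mul_left h hcpos
    have h2 : Real.sqrt a ≤ Real.sqrt b :=
      le_of_pow_le_pow_left₀ (by norm_num) (Real.sqrt_nonneg b) h1
    exact (Real.sqrt_le_sqrt_iff hb).1 h2
  have hlow : (1 - K * x) * x ≤ u := hmono _ _ ht₁0 hu0 htr1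
  have hhigh : u ≤ (1 + K * x) * x := hmono _ _ hu0 (by positivity) htr2
  have hexp1 : (1 - K * x) * x = x - K * x ^ 2 := by ring
  have hexp2 : (1 + K * x) * x = x + K * x ^ 2 := by ring
  rw [hexp1] at hlow
  rw [hexp2] at hhigh
  have hKxx : K * x ^ 2 ≤ (1/2) * x := by
    have h := mul_le_mul_of_nonneg_right hxK.le hx0.le
    linarith [h]
  have hx2u : x ≤ 2 * u := by linarith
  have hu2 : u ^ 2 = s ^ 2 * t ^ ((4:ℝ)/3) := by
    rw [hudef, mul_pow, rpow_mul_natCast t ht.le,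
      show (2:ℝ)/3 * (2:ℕ) = (4:ℝ)/3 by norm_num]
  have habs : |x - u| ≤ K * x ^ 2 := abs_le.2 ⟨by linarith, by linarith⟩
  have hx2 : x ^ 2 ≤ (2 * u) ^ 2 := pow_le_pow_left₀ hx0.le hx2u 2
  calc |x - u| ≤ K * x ^ 2 := habs
    _ ≤ K * (2 * u) ^ 2 := mul_le_mul_of_nonneg_left hx2 hKpos.le
    _ = 4 * K * u ^ 2 := by ring
    _ = 4 * K * s ^ 2 * t ^ ((4:ℝ)/3) := by rw [hu2]; ring

/-- Small-density expansion of the Fermi energy measured from the band bottom: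
if `(2π)⁻³ vol{k ∈ Q : E(k) ≤ E₀ + Δ(ρ₀)} = ρ₀` and `Δ(ρ₀) → 0`, then
`Δ(ρ₀) = s ρ₀^{2/3} + O(ρ₀^{4/3})` with `s = (6π²)^{2/3} / (2 (m₁m₂m₃)^{1/3})`. -/
theorem stmt_15 (m₁ m₂ m₃ : ℝ) (hm₁ : 0 < m₁) (hm₂ : 0 < m₂) (hm₃ : 0 < m₃)
    (E : (Fin 3 → ℝ) → ℝ) (E₀ : ℝ)
    (Q : Set (Fin 3 → ℝ)) (hQ : Q = Set.Icc (fun _ => -π) (fun _ => π))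
    (hcont : ContinuousOn E Q) (hE0 : E 0 = E₀)
    (hmin : ∀ r > (0 : ℝ), ∃ ε > (0 : ℝ), ∀ k ∈ Q, r ≤ ‖k‖ → E₀ + ε ≤ E k)
    (hquad : (fun k : Fin 3 → ℝ =>
        E k - (E₀ + (1 / 2) * ((k 0) ^ 2 / m₁ + (k 1) ^ 2 / m₂ + (k 2) ^ 2 / m₃)))
      =O[nhds 0] fun k => ‖k‖ ^ 4)
    (ρ₁ : ℝ) (hρ₁ : 0 < ρ₁) (Δ : ℝ → ℝ)
    (hΔpos : ∀ ρ₀ ∈ Set.Ioo (0 : ℝ) ρ₁, 0 < Δ ρ₀)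
    (hΔeq : ∀ ρ₀ ∈ Set.Ioo (0 : ℝ) ρ₁,
      ((2 * π) ^ 3)⁻¹ * (volume {k ∈ Q | E k ≤ E₀ + Δ ρ₀}).toReal = ρ₀)
    (hΔ0 : Tendsto Δ (nhdsWithin 0 (Set.Ioi 0)) (nhds 0))
    (s : ℝ) (hs : s = (6 * π ^ 2) ^ ((2 : ℝ) / 3) / (2 * (m₁ * m₂ * m₃) ^ ((1 : ℝ) / 3))) :
    (fun ρ₀ : ℝ => Δ ρ₀ - s * ρ₀ ^ ((2 : ℝ) / 3))
      =O[nhdsWithin 0 (Set.Ioi 0)] fun ρ₀ => ρ₀ ^ ((4 : ℝ) / 3) := by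
  have hspos : 0 < s := by rw [hs]; positivity
  set mx : ℝ := max m₁ (max m₂ m₃) with hmxdef
  have hmxpos : 0 < mx := lt_of_lt_of_le hm₁ (le_max_left _ _)
  have hm₁x : m₁ ≤ mx := le_max_left _ _
  have hm₂x : m₂ ≤ mx := le_trans (le_max_left _ _) (le_max_right _ _)
  have hm₃x : m₃ ≤ mx := le_trans (le_max_right _ _) (le_max_right _ _)
  clear_value mx
  -- quantitative quadratic bound
  obtain ⟨C, hC0, r₁, hr₁, hCb⟩ :
      ∃ C : ℝ, 0 ≤ C ∧ ∃ r₁ > (0:ℝ), ∀ k : Fin 3 → ℝ, ‖k‖ < r₁ →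
        |E k - (E₀ + (1 / 2) * ((k 0) ^ 2 / m₁ + (k 1) ^ 2 / m₂ + (k 2) ^ 2 / m₃))|
          ≤ C * ‖k‖ ^ 4 := by
    rw [isBigO_iff] at hquad
    obtain ⟨C₀, hC₀⟩ := hquad
    rw [Metric.eventually_nhds_iff] at hC₀
    obtain ⟨r₁, hr₁, hb⟩ := hC₀
    refine ⟨max C₀ 0, le_max_right _ _, r₁, hr₁, fun k hk => ?_⟩
    have hbk := hb (show dist k 0 < r₁ by rwa [dist_zero_right])
    rw [Real.norm_eq_abs] at hbk
    have h4 : ‖(‖k‖ ^ 4)‖ = ‖k‖ ^ 4 := by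
      rw [Real.norm_eq_abs, abs_of_nonneg (by positivity)]
    rw [h4] at hbk
    calc |E k - (E₀ + 1 / 2 * (k 0 ^ 2 / m₁ + k 1 ^ 2 / m₂ + k 2 ^ 2 / m₃))|
        ≤ C₀ * ‖k‖ ^ 4 := hbk
      _ ≤ max C₀ 0 * ‖k‖ ^ 4 := mul_le_mul_of_nonneg_right (le_max_left _ _) (by positivity)
  set r₀ : ℝ := min (min (r₁ / 2) π) (Real.sqrt (4 * mx * C + 1))⁻¹ with hr₀def
  have hr₀pos : 0 < r₀ := by
    rw [hr₀def]
    exact lt_min (lt_min (by linarith) Real.pi_pos)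
      (inv_pos.2 (Real.sqrt_pos.2 (by positivity)))
  have hr₀r₁ : r₀ < r₁ :=
    lt_of_le_of_lt (le_trans (min_le_left _ _) (min_le_left _ _)) (by linarith)
  have hr₀π : r₀ ≤ π := le_trans (min_le_left _ _) (min_le_right _ _)
  have hr₀C : 2 * mx * C * r₀ ^ 2 ≤ 1 / 2 := by
    have h1 : r₀ ≤ (Real.sqrt (4 * mx * C + 1))⁻¹ := min_le_right _ _
    have h2 : r₀ ^ 2 ≤ (4 * mx * C + 1)⁻¹ := by
      calc r₀ ^ 2 ≤ ((Real.sqrt (4 * mx * C + 1))⁻¹) ^ 2 :=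
            pow_le_pow_left₀ hr₀pos.le h1 2
        _ = (4 * mx * C + 1)⁻¹ := by
            rw [inv_pow, Real.sq_sqrt (by positivity : (0:ℝ) ≤ 4 * mx * C + 1)]
    have h3 : 0 < 4 * mx * C + 1 := by positivity
    have h4 : (4 * mx * C + 1)⁻¹ * (4 * mx * C + 1) = 1 := inv_mul_cancel₀ h3.ne'
    nlinarith [mul_le_mul_of_nonneg_left h2 (by positivity : (0:ℝ) ≤ 2 * mx * C)]
  clear_value r₀
  obtain ⟨ε, hεpos, hε⟩ := hmin r₀ hr₀pos
  set K : ℝ := 16 * C * mx ^ 2 + 1 with hKdef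
  have hKpos : 0 < K := by rw [hKdef]; positivity
  clear_value K
  set δ : ℝ := min ε (min (1 / (2 * K)) (r₀ ^ 2 / (2 * mx))) with hδdef
  have hδpos : 0 < δ := by rw [hδdef]; positivity
  have hδ1 : δ ≤ ε := by rw [hδdef]; exact min_le_left _ _
  have hδ2 : δ ≤ 1 / (2 * K) := by
    rw [hδdef]; exact le_trans (min_le_right _ _) (min_le_left _ _)
  have hδ3 : δ ≤ r₀ ^ 2 / (2 * mx) := by
    rw [hδdef]; exact le_trans (min_le_right _ _) (min_le_right _ _)
  clear_value δ
  rw [Asymptotics.isBigO_iff]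
  refine ⟨4 * K * s ^ 2, ?_⟩
  have hev1 : ∀ᶠ t in nhdsWithin (0:ℝ) (Set.Ioi 0), t ∈ Set.Ioo (0:ℝ) ρ₁ :=
    Ioo_mem_nhdsGT_of_mem ⟨le_refl 0, hρ₁⟩
  have hev2 : ∀ᶠ t in nhdsWithin (0:ℝ) (Set.Ioi 0), Δ t < δ :=
    hΔ0.eventually_lt_const hδpos
  filter_upwards [hev1, hev2] with t ht hlt
  rw [Real.norm_eq_abs, Real.norm_eq_abs, abs_of_nonneg (Real.rpow_nonneg ht.1.le _)]
  have hx0 : 0 < Δ t := hΔpos t ht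
  obtain ⟨hsub1, hsub2⟩ := sandwich E E₀ Q hQ
    (fun k => (1 / 2) * ((k 0) ^ 2 / m₁ + (k 1) ^ 2 / m₂ + (k 2) ^ 2 / m₃))
    mx hmxpos (qlow_bound m₁ m₂ m₃ hm₁ hm₂ hm₃ mx hm₁x hm₂x hm₃x)
    C hC0 r₁ hCb r₀ hr₀pos hr₀r₁ hr₀π hr₀C ε hε K hKdef δ hδ1 hδ2 hδ3
    (Δ t) hx0 hlt
  exact pointwise
    (fun k => (1 / 2) * ((k 0) ^ 2 / m₁ + (k 1) ^ 2 / m₂ + (k 2) ^ 2 / m₃))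
    {k ∈ Q | E k ≤ E₀ + Δ t}
    ((4 / 3) * π * (Real.sqrt (2 * m₁) * Real.sqrt (2 * m₂) * Real.sqrt (2 * m₃)))
    (by positivity)
    (fun t' ht' => vol_q_sublevel m₁ m₂ m₃ hm₁ hm₂ hm₃ t' ht')
    s hspos (fun t' ht' => key_identity m₁ m₂ m₃ hm₁ hm₂ hm₃ s hs t' ht')
    K hKpos δ hδ2 (Δ t) t hx0 hlt hsub1 hsub2 ht.1 (hΔeq t ht)
end
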